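/- arXiv:1605.03833 — 4 statements merged into one kernel-verified Lean document; each statement's English description precedes it below -/
import Mathlib

section
/- Let C ≥ 1 and let φ ∈ GL(E) satisfy ‖φ‖ ≤ C and ‖φ⁻¹‖ ≤ C. Then the map induced by φ on the projective space P(E) is C²-Lipschitz for the angle metric: α(φ(x), φ(y)) ≤ C²·α(x, y) for all nonzero x, y ∈ E. -/
/-!
Lemma: if `φ ∈ GL(E)` satisfies `‖φ‖ ≤ C` and `‖φ⁻¹‖ ≤ C`, then the map induced by `φ`
on the projective space `P(E)` is `C²`-Lipschitz for the angle metric.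
-/

open scoped RealInnerProductSpace
open Real Filter

set_option linter.unusedSectionVars false
set_option maxHeartbeats 1000000

noncomputable section

variable {E : Type*} [NormedAddCommGroup E] [InnerProductSpace ℝ E] [FiniteDimensional ℝ E]

/-- The angle `α(x, y) = arccos (|⟨x,y⟫| / (‖x‖ ‖y‖))` between the lines spanned by `x` and
`y`. -/
noncomputable def lineAngle (x y : E) : ℝ :=
  Real.arccos (|⟪x, y⟫| / (‖x‖ * ‖y‖))

/-- The operator norm of an endomorphism (with respect to the inner product norm). -/
noncomputable def opNorm (f : E →ₗ[ℝ] E) : ℝ :=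
  ⨆ x : {x : E // ‖x‖ ≤ 1}, ‖f x.1‖

/-- Auxiliary: the tendsto fact used in the limit argument. -/
lemma auxTendsto_n_arcsin (c : ℝ) (hc : 0 < c) :
    Tendsto (fun n : ℕ => (n : ℝ) * Real.arcsin (min 1 (c / n))) atTop (nhds c) := by
  have hderiv : HasDerivAt Real.arcsin 1 0 := by
    have h := Real.hasDerivAt_arcsin (by norm_num : (0:ℝ) ≠ -1) (by norm_num : (0:ℝ) ≠ 1)
    simpa using h
  have hslope : Tendsto (slope Real.arcsin 0) (nhdsWithin 0 {(0:ℝ)}ᶜ) (nhds 1) :=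
    hasDerivAt_iff_tendsto_slope.1 hderiv
  have ht : Tendsto (fun n : ℕ => c / (n : ℝ)) atTop (nhdsWithin 0 {(0:ℝ)}ᶜ) := by
    rw [tendsto_nhdsWithin_iff]
    constructor
    · exact tendsto_const_nhds.div_atTop tendsto_natCast_atTop_atTop
    · filter_upwards [eventually_ge_atTop 1] with n hn
      have : (0:ℝ) < (n:ℝ) := by exact_mod_cast Nat.lt_of_lt_of_le Nat.zero_lt_one hn
      simp only [Set.mem_compl_iff, Set.mem_singleton_iff]
      positivity
  have h1 : Tendsto (fun n : ℕ => Real.arcsin (c / n) / (c / n)) atTop (nhds 1) := by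
    have := hslope.comp ht
    refine this.congr fun n => ?_
    simp [slope_fun_def_field, Real.arcsin_zero]
  have h2 : Tendsto (fun n : ℕ => c * (Real.arcsin (c / n) / (c / n))) atTop (nhds (c * 1)) :=
    h1.const_mul c
  rw [mul_one] at h2
  refine h2.congr' ?_
  filter_upwards [eventually_ge_atTop (max 1 ⌈c⌉₊)] with n hn
  have hn1 : 1 ≤ n := le_trans (le_max_left _ _) hn
  have hnc : c ≤ (n : ℝ) := le_trans (Nat.le_ceil c) (by exact_mod_cast le_trans (le_max_right _ _) hn)
  have hnpos : (0:ℝ) < (n:ℝ) := by exact_mod_cast hn1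
  have hle : c / (n:ℝ) ≤ 1 := by rw [div_le_one hnpos]; exact hnc
  have hne : c / (n:ℝ) ≠ 0 := by positivity
  rw [min_eq_right hle]
  field_simp


lemma opNorm_apply_le (f : E →ₗ[ℝ] E) (x : E) : ‖f x‖ ≤ opNorm f * ‖x‖ := by
  set F := LinearMap.toContinuousLinearMap f with hF
  have hFx : ∀ v : E, f v = F v := fun v => rfl
  have hbdd : BddAbove (Set.range fun x : {x : E // ‖x‖ ≤ 1} => ‖f x.1‖) := by
    refine ⟨‖F‖, ?_⟩
    rintro r ⟨v, rfl⟩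
    calc ‖f v.1‖ = ‖F v.1‖ := by rw [hFx]
      _ ≤ ‖F‖ * ‖v.1‖ := F.le_opNorm _
      _ ≤ ‖F‖ * 1 := by
          have := v.2
          have := norm_nonneg F
          nlinarith
      _ = ‖F‖ := mul_one _
  rcases eq_or_ne x 0 with rfl | hx
  · simp only [map_zero, norm_zero, mul_zero]; exact le_refl 0
  · have hxn : (0:ℝ) < ‖x‖ := norm_pos_iff.2 hx
    set u : E := ‖x‖⁻¹ • x with hu
    have hun : ‖u‖ ≤ 1 := by
      rw [hu, norm_smul, norm_inv, norm_norm, inv_mul_cancel₀ hxn.ne']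
    have h1 : ‖f u‖ ≤ opNorm f := le_ciSup hbdd ⟨u, hun⟩
    have h2 : f x = ‖x‖ • f u := by
      rw [hu, map_smul, smul_smul, mul_inv_cancel₀ hxn.ne', one_smul]
    rw [h2, norm_smul, norm_norm, mul_comm]
    exact mul_le_mul_of_nonneg_right h1 hxn.le

lemma opNorm_nonneg (f : E →ₗ[ℝ] E) : 0 ≤ opNorm f :=
  Real.iSup_nonneg fun _ => norm_nonneg _

lemma lineAngle_nonneg (x y : E) : 0 ≤ lineAngle x y := Real.arccos_nonneg _

lemma lineAngle_le_pi_div_two (x y : E) : lineAngle x y ≤ π / 2 :=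
  Real.arccos_le_pi_div_two.2 (div_nonneg (abs_nonneg _) (by positivity))

lemma lineAngle_self {x : E} (hx : x ≠ 0) : lineAngle x x = 0 := by
  have hxn : (0:ℝ) < ‖x‖ := norm_pos_iff.2 hx
  rw [lineAngle, real_inner_self_eq_norm_mul_norm, abs_of_pos (by positivity),
    div_self (by positivity), Real.arccos_one]

lemma gram_nonneg (u v : E) : 0 ≤ ‖u‖ ^ 2 * ‖v‖ ^ 2 - ⟪u, v⟫ ^ 2 := by
  have h := real_inner_mul_inner_self_le u v
  rw [real_inner_self_eq_norm_sq, real_inner_self_eq_norm_sq] at h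
  nlinarith [h]

lemma sin_lineAngle (u v : E) (hu : u ≠ 0) (hv : v ≠ 0) :
    Real.sin (lineAngle u v) = Real.sqrt (‖u‖ ^ 2 * ‖v‖ ^ 2 - ⟪u, v⟫ ^ 2) / (‖u‖ * ‖v‖) := by
  have hun : (0:ℝ) < ‖u‖ := norm_pos_iff.2 hu
  have hvn : (0:ℝ) < ‖v‖ := norm_pos_iff.2 hv
  have hab : (0:ℝ) < ‖u‖ * ‖v‖ := by positivity
  rw [lineAngle, Real.sin_arccos, div_pow, sq_abs,
    show (1 - ⟪u, v⟫ ^ 2 / (‖u‖ * ‖v‖) ^ 2) =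
      (‖u‖ ^ 2 * ‖v‖ ^ 2 - ⟪u, v⟫ ^ 2) / (‖u‖ * ‖v‖) ^ 2 by field_simp,
    Real.sqrt_div (gram_nonneg u v), Real.sqrt_sq hab.le]

lemma sin_lineAngle_map_le (C : ℝ) (hC : 1 ≤ C) (φ : E ≃ₗ[ℝ] E)
    (hφ : opNorm (φ : E →ₗ[ℝ] E) ≤ C) (hφinv : opNorm (φ.symm : E →ₗ[ℝ] E) ≤ C)
    (u v : E) (hu : u ≠ 0) (hv : v ≠ 0) :
    Real.sin (lineAngle (φ u) (φ v)) ≤ C ^ 2 * Real.sin (lineAngle u v) := by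
  have hC0 : (0:ℝ) < C := lt_of_lt_of_le one_pos hC
  have hu' : φ u ≠ 0 := fun h => hu (by simpa using φ.injective (by simpa using h))
  have hv' : φ v ≠ 0 := fun h => hv (by simpa using φ.injective (by simpa using h))
  have ha : (0:ℝ) < ‖u‖ := norm_pos_iff.2 hu
  have hb : (0:ℝ) < ‖v‖ := norm_pos_iff.2 hv
  have ha' : (0:ℝ) < ‖φ u‖ := norm_pos_iff.2 hu'
  have hb' : (0:ℝ) < ‖φ v‖ := norm_pos_iff.2 hv'
  set c : ℝ := ⟪u, v⟫ / ‖u‖ ^ 2 with hc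
  set w : E := v - c • u with hw
  -- expansion of ‖w‖²
  have hexp : ∀ (p q : E), ‖q - c • p‖ ^ 2 = ‖q‖ ^ 2 - 2 * c * ⟪p, q⟫ + c ^ 2 * ‖p‖ ^ 2 := by
    intro p q
    rw [norm_sub_sq_real, real_inner_smul_right, norm_smul, real_inner_comm]
    simp [mul_pow, sq_abs]
    ring
  have key1 : ‖u‖ ^ 2 * ‖w‖ ^ 2 = ‖u‖ ^ 2 * ‖v‖ ^ 2 - ⟪u, v⟫ ^ 2 := by
    rw [hw, hexp]
    rw [hc]
    field_simp
    ring
  have key2 : ‖φ u‖ ^ 2 * ‖φ v‖ ^ 2 - ⟪φ u, φ v⟫ ^ 2 ≤ ‖φ u‖ ^ 2 * ‖φ v - c • φ u‖ ^ 2 := by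
    rw [hexp]
    nlinarith [sq_nonneg (⟪φ u, φ v⟫ - c * ‖φ u‖ ^ 2)]
  have hmap : φ v - c • φ u = φ w := by rw [hw, map_sub, map_smul]
  have hbound : ‖φ w‖ ≤ C * ‖w‖ := by
    calc ‖φ w‖ ≤ opNorm (φ : E →ₗ[ℝ] E) * ‖w‖ := opNorm_apply_le _ w
      _ ≤ C * ‖w‖ := mul_le_mul_of_nonneg_right hφ (norm_nonneg _)
  set G : ℝ := ‖u‖ ^ 2 * ‖v‖ ^ 2 - ⟪u, v⟫ ^ 2 with hG
  set G' : ℝ := ‖φ u‖ ^ 2 * ‖φ v‖ ^ 2 - ⟪φ u, φ v⟫ ^ 2 with hG'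
  have hsG : Real.sqrt G = ‖u‖ * ‖w‖ := by
    rw [← key1]
    rw [show ‖u‖ ^ 2 * ‖w‖ ^ 2 = (‖u‖ * ‖w‖) ^ 2 by ring]
    exact Real.sqrt_sq (by positivity)
  have hsG' : Real.sqrt G' ≤ ‖φ u‖ * (C * ‖w‖) := by
    calc Real.sqrt G' ≤ Real.sqrt (‖φ u‖ ^ 2 * ‖φ v - c • φ u‖ ^ 2) :=
          Real.sqrt_le_sqrt key2
      _ = ‖φ u‖ * ‖φ v - c • φ u‖ := by
          rw [show ‖φ u‖ ^ 2 * ‖φ v - c • φ u‖ ^ 2 = (‖φ u‖ * ‖φ v - c • φ u‖) ^ 2 by ring]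
          exact Real.sqrt_sq (by positivity)
      _ ≤ ‖φ u‖ * (C * ‖w‖) := by
          rw [hmap]
          exact mul_le_mul_of_nonneg_left hbound ha'.le
  have hbb' : ‖v‖ ≤ C * ‖φ v‖ := by
    calc ‖v‖ = ‖φ.symm (φ v)‖ := by rw [LinearEquiv.symm_apply_apply]
      _ ≤ opNorm (φ.symm : E →ₗ[ℝ] E) * ‖φ v‖ := opNorm_apply_le _ _
      _ ≤ C * ‖φ v‖ := mul_le_mul_of_nonneg_right hφinv (norm_nonneg _)
  rw [sin_lineAngle _ _ hu' hv', sin_lineAngle _ _ hu hv, ← hG, ← hG',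
    show C ^ 2 * (Real.sqrt G / (‖u‖ * ‖v‖)) = (C ^ 2 * Real.sqrt G) / (‖u‖ * ‖v‖) by ring,
    div_le_div_iff₀ (by positivity) (by positivity)]
  have h1 : ‖u‖ * Real.sqrt G' ≤ C * ‖φ u‖ * Real.sqrt G := by
    have := mul_le_mul_of_nonneg_left hsG' ha.le
    rw [hsG]
    nlinarith [this]
  have h2 := mul_le_mul h1 hbb' hb.le (by positivity : (0:ℝ) ≤ C * ‖φ u‖ * Real.sqrt G)
  nlinarith [h2]

lemma arccos_le_arccos' {s t : ℝ} (h : s ≤ t) : Real.arccos t ≤ Real.arccos s := by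
  unfold Real.arccos
  have := Real.monotone_arcsin h
  linarith

lemma lineAngle_smul_smul {r s : ℝ} (hr : r ≠ 0) (hs : s ≠ 0) (x y : E) :
    lineAngle (r • x) (s • y) = lineAngle x y := by
  unfold lineAngle
  rcases eq_or_ne x 0 with rfl | hx
  · simp
  rcases eq_or_ne y 0 with rfl | hy
  · simp
  have hxn : (0:ℝ) < ‖x‖ := norm_pos_iff.2 hx
  have hyn : (0:ℝ) < ‖y‖ := norm_pos_iff.2 hy
  have hr' : (0:ℝ) < |r| := abs_pos.2 hr
  have hs' : (0:ℝ) < |s| := abs_pos.2 hs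
  rw [real_inner_smul_left, real_inner_smul_right, norm_smul, norm_smul]
  congr 1
  rw [abs_mul, abs_mul]
  field_simp
  simp only [Real.norm_eq_abs]
  ring

lemma lineAngle_triangle_unit (a b c : E) (ha : ‖a‖ = 1) (hb : ‖b‖ = 1) (hc : ‖c‖ = 1) :
    lineAngle a c ≤ lineAngle a b + lineAngle b c := by
  set p : ℝ := ⟪a, b⟫ with hp
  set q : ℝ := ⟪b, c⟫ with hq
  set r : ℝ := ⟪a, c⟫ with hr
  have hp1 : |p| ≤ 1 := by
    have := abs_real_inner_le_norm a b; rwa [ha, hb, one_mul] at this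
  have hq1 : |q| ≤ 1 := by
    have := abs_real_inner_le_norm b c; rwa [hb, hc, one_mul] at this
  have hr1 : |r| ≤ 1 := by
    have := abs_real_inner_le_norm a c; rwa [ha, hc, one_mul] at this
  have hA : lineAngle a b = Real.arccos |p| := by
    unfold lineAngle; rw [ha, hb, one_mul, div_one]
  have hB : lineAngle b c = Real.arccos |q| := by
    unfold lineAngle; rw [hb, hc, one_mul, div_one]
  have hC : lineAngle a c = Real.arccos |r| := by
    unfold lineAngle; rw [ha, hc, one_mul, div_one]
  rcases le_or_gt (π / 2) (lineAngle a b + lineAngle b c) with hcase | hcase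
  · exact le_trans (lineAngle_le_pi_div_two a c) hcase
  -- key inequality
  have hbb : ⟪b, b⟫ = (1:ℝ) := by
    rw [real_inner_self_eq_norm_sq, hb]; norm_num
  have hs : ⟪a - p • b, c - q • b⟫ = r - p * q := by
    rw [inner_sub_left, inner_sub_right, inner_sub_right, real_inner_smul_left,
      real_inner_smul_left, real_inner_smul_right, real_inner_smul_right, hbb]
    simp only [← hp, ← hq, ← hr]
    ring
  have hna : ‖a - p • b‖ = Real.sqrt (1 - p ^ 2) := by
    have h2 : ‖a - p • b‖ ^ 2 = 1 - p ^ 2 := by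
      rw [norm_sub_sq_real, real_inner_smul_right, norm_smul, ha, hb]
      simp [sq_abs]
      ring
    rw [← h2, Real.sqrt_sq (norm_nonneg _)]
  have hnc : ‖c - q • b‖ = Real.sqrt (1 - q ^ 2) := by
    have h2 : ‖c - q • b‖ ^ 2 = 1 - q ^ 2 := by
      rw [norm_sub_sq_real, real_inner_smul_right, norm_smul, hc, hb]
      simp [sq_abs]
      rw [real_inner_comm b c]
      simp only [← hq]
      ring
    rw [← h2, Real.sqrt_sq (norm_nonneg _)]
  have hCS : |r - p * q| ≤ Real.sqrt (1 - p ^ 2) * Real.sqrt (1 - q ^ 2) := by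
    rw [← hna, ← hnc, ← hs]
    exact abs_real_inner_le_norm _ _
  have hkey : |p| * |q| - Real.sqrt (1 - p ^ 2) * Real.sqrt (1 - q ^ 2) ≤ |r| := by
    have h1 : |p * q| - |r| ≤ |p * q - r| := abs_sub_abs_le_abs_sub _ _
    rw [abs_sub_comm] at h1
    rw [← abs_mul]
    linarith [hCS, h1]
  -- cos of sum
  have hAB0 : 0 ≤ lineAngle a b + lineAngle b c := by
    have := Real.arccos_nonneg |p|
    have := Real.arccos_nonneg |q|
    rw [hA, hB]; linarith
  have hcos : Real.cos (lineAngle a b + lineAngle b c) ≤ |r| := by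
    rw [hA, hB, Real.cos_add, Real.cos_arccos (by linarith [abs_nonneg p]) hp1,
      Real.cos_arccos (by linarith [abs_nonneg q]) hq1, Real.sin_arccos, Real.sin_arccos,
      sq_abs, sq_abs]
    exact hkey
  calc lineAngle a c = Real.arccos |r| := hC
    _ ≤ Real.arccos (Real.cos (lineAngle a b + lineAngle b c)) := arccos_le_arccos' hcos
    _ = lineAngle a b + lineAngle b c := by
        apply Real.arccos_cos hAB0
        linarith [Real.pi_pos, hcase]

lemma lineAngle_triangle (a b c : E) (ha : a ≠ 0) (hb : b ≠ 0) (hc : c ≠ 0) :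
    lineAngle a c ≤ lineAngle a b + lineAngle b c := by
  have han : (0:ℝ) < ‖a‖ := norm_pos_iff.2 ha
  have hbn : (0:ℝ) < ‖b‖ := norm_pos_iff.2 hb
  have hcn : (0:ℝ) < ‖c‖ := norm_pos_iff.2 hc
  have h1 : lineAngle a c = lineAngle (‖a‖⁻¹ • a) (‖c‖⁻¹ • c) :=
    (lineAngle_smul_smul (by positivity) (by positivity) a c).symm
  have h2 : lineAngle a b = lineAngle (‖a‖⁻¹ • a) (‖b‖⁻¹ • b) :=
    (lineAngle_smul_smul (by positivity) (by positivity) a b).symm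
  have h3 : lineAngle b c = lineAngle (‖b‖⁻¹ • b) (‖c‖⁻¹ • c) :=
    (lineAngle_smul_smul (by positivity) (by positivity) b c).symm
  rw [h1, h2, h3]
  apply lineAngle_triangle_unit <;>
    · rw [norm_smul, norm_inv, norm_norm]
      field_simp

lemma lineAngle_chain (v : ℕ → E) (hv : ∀ i, v i ≠ 0) :
    ∀ n : ℕ, lineAngle (v 0) (v n) ≤ ∑ i ∈ Finset.range n, lineAngle (v i) (v (i + 1)) := by
  intro n
  induction n with
  | zero => simp [lineAngle_self (hv 0)]
  | succ n ih =>
      rw [Finset.sum_range_succ]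
      calc lineAngle (v 0) (v (n + 1)) ≤ lineAngle (v 0) (v n) + lineAngle (v n) (v (n + 1)) :=
            lineAngle_triangle _ _ _ (hv 0) (hv n) (hv (n + 1))
        _ ≤ _ := by linarith [ih]

lemma main_unit (C : ℝ) (hC : 1 ≤ C) (φ : E ≃ₗ[ℝ] E)
    (hφ : opNorm (φ : E →ₗ[ℝ] E) ≤ C) (hφinv : opNorm (φ.symm : E →ₗ[ℝ] E) ≤ C)
    (x y : E) (hx1 : ‖x‖ = 1) (hy1 : ‖y‖ = 1) (hxy : 0 ≤ ⟪x, y⟫) :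
    lineAngle (φ x) (φ y) ≤ C ^ 2 * lineAngle x y := by
  have hC0 : (0:ℝ) < C := lt_of_lt_of_le one_pos hC
  have hx : x ≠ 0 := fun h => by rw [h, norm_zero] at hx1; norm_num at hx1
  have hy : y ≠ 0 := fun h => by rw [h, norm_zero] at hy1; norm_num at hy1
  set α := lineAngle x y with hαdef
  have hα0 : 0 ≤ α := lineAngle_nonneg x y
  have hα2 : α ≤ π / 2 := lineAngle_le_pi_div_two x y
  have hπ : α < π := lt_of_le_of_lt hα2 (by linarith [Real.pi_pos])
  have hxx : ⟪x, x⟫ = (1:ℝ) := by rw [real_inner_self_eq_norm_sq, hx1]; norm_num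
  have hinner1 : |⟪x, y⟫| ≤ 1 := by
    have := abs_real_inner_le_norm x y; rwa [hx1, hy1, one_mul] at this
  have hcosα : Real.cos α = ⟪x, y⟫ := by
    rw [hαdef]
    unfold lineAngle
    rw [hx1, hy1, one_mul, div_one, abs_of_nonneg hxy]
    exact Real.cos_arccos (by linarith) (by linarith [abs_le.1 hinner1])
  -- the case α = 0
  rcases eq_or_lt_of_le hα0 with hα | hα
  · rw [← hα, mul_zero]
    have hsin := sin_lineAngle_map_le C hC φ hφ hφinv x y hx hy
    rw [← hαdef, ← hα, Real.sin_zero, mul_zero] at hsin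
    by_contra hcon
    push_neg at hcon
    have h1 : 0 < lineAngle (φ x) (φ y) := hcon
    have h2 : lineAngle (φ x) (φ y) < π :=
      lt_of_le_of_lt (lineAngle_le_pi_div_two _ _) (by linarith [Real.pi_pos])
    linarith [Real.sin_pos_of_pos_of_lt_pi h1 h2]
  -- main case 0 < α
  have hsinα_pos : 0 < Real.sin α := Real.sin_pos_of_pos_of_lt_pi hα hπ
  have hwnorm : ‖y - Real.cos α • x‖ = Real.sin α := by
    have h2 : ‖y - Real.cos α • x‖ ^ 2 = Real.sin α ^ 2 := by
      rw [norm_sub_sq_real, real_inner_smul_right, norm_smul, hy1, hx1, real_inner_comm x y,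
        ← hcosα]
      simp only [Real.norm_eq_abs, mul_pow, sq_abs, one_pow, mul_one]
      nlinarith [Real.sin_sq_add_cos_sq α]
    calc ‖y - Real.cos α • x‖ = √(‖y - Real.cos α • x‖ ^ 2) := (Real.sqrt_sq (norm_nonneg _)).symm
      _ = √(Real.sin α ^ 2) := by rw [h2]
      _ = Real.sin α := Real.sqrt_sq hsinα_pos.le
  set z : E := (Real.sin α)⁻¹ • (y - Real.cos α • x) with hzdef
  have hzz : ⟪z, z⟫ = (1:ℝ) := by
    rw [real_inner_self_eq_norm_sq, hzdef, norm_smul, norm_inv, Real.norm_eq_abs,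
      abs_of_pos hsinα_pos, hwnorm, inv_mul_cancel₀ hsinα_pos.ne']
    norm_num
  have hxz : ⟪x, z⟫ = (0:ℝ) := by
    rw [hzdef, real_inner_smul_right, inner_sub_right, real_inner_smul_right, hxx, hcosα]
    ring
  have hy_eq : y = Real.cos α • x + Real.sin α • z := by
    rw [hzdef, smul_smul, mul_inv_cancel₀ hsinα_pos.ne', one_smul]
    abel
  set v : ℝ → E := fun t => Real.cos t • x + Real.sin t • z with hvdef
  have hvinner : ∀ s t : ℝ, ⟪v s, v t⟫ = Real.cos (s - t) := by
    intro s t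
    rw [hvdef]
    simp only [inner_add_left, inner_add_right, real_inner_smul_left, real_inner_smul_right,
      hxx, hzz, hxz, real_inner_comm x z, hxz]
    rw [Real.cos_sub]
    ring
  have hvnorm : ∀ t : ℝ, ‖v t‖ = 1 := by
    intro t
    have h1 : ⟪v t, v t⟫ = (1:ℝ) := by rw [hvinner, sub_self, Real.cos_zero]
    rw [real_inner_self_eq_norm_sq] at h1
    calc ‖v t‖ = √(‖v t‖ ^ 2) := (Real.sqrt_sq (norm_nonneg _)).symm
      _ = √1 := by rw [h1]
      _ = 1 := Real.sqrt_one
  have hvne : ∀ t : ℝ, v t ≠ 0 := fun t h => by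
    have := hvnorm t; rw [h, norm_zero] at this; norm_num at this
  have hv0 : v 0 = x := by rw [hvdef]; simp
  have hvα : v α = y := by rw [hvdef, hy_eq]
  have hpiece : ∀ s t : ℝ, lineAngle (v s) (v t) = Real.arccos |Real.cos (s - t)| := by
    intro s t
    unfold lineAngle
    rw [hvinner, hvnorm, hvnorm, one_mul, div_one]
  -- key bound for each n ≥ 1
  have key : ∀ n : ℕ, 1 ≤ n →
      lineAngle (φ x) (φ y) ≤ (n : ℝ) * Real.arcsin (min 1 (C ^ 2 * α / n)) := by
    intro n hn
    have hnR : (0:ℝ) < (n : ℝ) := by exact_mod_cast hn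
    set w : ℕ → E := fun i => v ((i : ℝ) * α / n) with hwdef
    have hw0 : w 0 = x := by rw [hwdef]; simp [hv0]
    have hwn : w n = y := by
      rw [hwdef]
      simp only
      rw [show ((n : ℝ) * α / n) = α by field_simp]
      exact hvα
    have hwne : ∀ i, w i ≠ 0 := fun i => hvne _
    have hφwne : ∀ i : ℕ, φ (w i) ≠ 0 := fun i h =>
      hwne i (by simpa using φ.injective (by simpa using h))
    -- angle between consecutive points
    have hαn0 : 0 ≤ α / n := by positivity
    have hαn2 : α / n ≤ π / 2 := by
      calc α / n ≤ α / 1 := by gcongr; exact_mod_cast hn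
        _ = α := div_one α
        _ ≤ π / 2 := hα2
    have hcos_nonneg : 0 ≤ Real.cos (α / n) :=
      Real.cos_nonneg_of_mem_Icc ⟨by linarith, hαn2⟩
    have hconsec : ∀ i : ℕ, lineAngle (w i) (w (i + 1)) = α / n := by
      intro i
      rw [hwdef]
      simp only
      rw [hpiece]
      rw [show ((i : ℝ) * α / n - ((i : ℕ) + 1 : ℕ) * α / n) = -(α / n) by push_cast; ring,
        Real.cos_neg, abs_of_nonneg hcos_nonneg]
      exact Real.arccos_cos hαn0 (by linarith [Real.pi_pos])
    -- each image piece is at most arcsin (min 1 (C^2 * α / n))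
    have hbound : ∀ i : ℕ, lineAngle (φ (w i)) (φ (w (i + 1))) ≤
        Real.arcsin (min 1 (C ^ 2 * α / n)) := by
      intro i
      set γ := lineAngle (φ (w i)) (φ (w (i + 1))) with hγdef
      have hγ0 : 0 ≤ γ := lineAngle_nonneg _ _
      have hγ2 : γ ≤ π / 2 := lineAngle_le_pi_div_two _ _
      have hsinγ : Real.sin γ ≤ C ^ 2 * Real.sin (α / n) := by
        have := sin_lineAngle_map_le C hC φ hφ hφinv (w i) (w (i + 1)) (hwne i) (hwne (i + 1))
        rwa [← hγdef, hconsec i] at this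
      have h1 : Real.sin γ ≤ min 1 (C ^ 2 * α / n) := by
        refine le_min (Real.sin_le_one γ) ?_
        calc Real.sin γ ≤ C ^ 2 * Real.sin (α / n) := hsinγ
          _ ≤ C ^ 2 * (α / n) := by
              apply mul_le_mul_of_nonneg_left (Real.sin_le hαn0) (by positivity)
          _ = C ^ 2 * α / n := by ring
      calc γ = Real.arcsin (Real.sin γ) := (Real.arcsin_sin (by linarith) hγ2).symm
        _ ≤ Real.arcsin (min 1 (C ^ 2 * α / n)) := Real.monotone_arcsin h1
    -- chain the triangle inequality
    have hchain := lineAngle_chain (fun i => φ (w i)) hφwne n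
    rw [hw0, hwn] at hchain
    calc lineAngle (φ x) (φ y) ≤ ∑ i ∈ Finset.range n, lineAngle (φ (w i)) (φ (w (i + 1))) :=
          hchain
      _ ≤ ∑ _i ∈ Finset.range n, Real.arcsin (min 1 (C ^ 2 * α / n)) :=
          Finset.sum_le_sum fun i _ => hbound i
      _ = (n : ℝ) * Real.arcsin (min 1 (C ^ 2 * α / n)) := by
          rw [Finset.sum_const, Finset.card_range, nsmul_eq_mul]
  -- pass to the limit
  have hc : 0 < C ^ 2 * α := by positivity
  have hlim := auxTendsto_n_arcsin (C ^ 2 * α) hc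
  refine ge_of_tendsto hlim ?_
  filter_upwards [eventually_ge_atTop 1] with n hn
  exact key n hn

theorem lipschitz_on_projective_space (C : ℝ) (hC : 1 ≤ C) (φ : E ≃ₗ[ℝ] E)
    (hφ : opNorm (φ : E →ₗ[ℝ] E) ≤ C) (hφinv : opNorm (φ.symm : E →ₗ[ℝ] E) ≤ C)
    (x y : E) (hx : x ≠ 0) (hy : y ≠ 0) :
    lineAngle (φ x) (φ y) ≤ C ^ 2 * lineAngle x y := by
  have hxn : (0:ℝ) < ‖x‖ := norm_pos_iff.2 hx
  have hyn : (0:ℝ) < ‖y‖ := norm_pos_iff.2 hy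
  set r : ℝ := ‖x‖⁻¹ with hrdef
  set s : ℝ := if (0:ℝ) ≤ ⟪x, y⟫ then ‖y‖⁻¹ else -‖y‖⁻¹ with hsdef
  have hsabs : |s| = ‖y‖⁻¹ := by
    rw [hsdef]
    split_ifs
    · exact abs_of_pos (by positivity)
    · rw [abs_neg]; exact abs_of_pos (by positivity)
  have hr : r ≠ 0 := by positivity
  have hs : s ≠ 0 := by
    intro h
    rw [h, abs_zero] at hsabs
    exact absurd hsabs.symm (by positivity)
  have h1 : lineAngle x y = lineAngle (r • x) (s • y) :=
    (lineAngle_smul_smul hr hs x y).symm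
  have h2 : lineAngle (φ x) (φ y) = lineAngle (φ (r • x)) (φ (s • y)) := by
    rw [map_smul, map_smul]
    exact (lineAngle_smul_smul hr hs (φ x) (φ y)).symm
  rw [h1, h2]
  apply main_unit C hC φ hφ hφinv
  · rw [norm_smul, hrdef, norm_inv, norm_norm, inv_mul_cancel₀ hxn.ne']
  · rw [norm_smul, Real.norm_eq_abs, hsabs, inv_mul_cancel₀ hyn.ne']
  · rw [real_inner_smul_left, real_inner_smul_right, hsdef]
    split_ifs with h
    · positivity
    · push_neg at h
      have hr' : (0:ℝ) < r := by positivity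
      have h2' : (0:ℝ) ≤ -⟪x, y⟫ := by linarith
      calc (0:ℝ) ≤ r * (‖y‖⁻¹ * -⟪x, y⟫) := by positivity
        _ = r * (-‖y‖⁻¹ * ⟪x, y⟫) := by ring

end
end

section
/- Fix a subset Π' ⊆ Π and a point X ∈ a⁺_{Π'}. Then for every Y ∈ a the following two conditions are equivalent: (i) Y ∈ a⁺_{Π'}, ⟨ϖᵢ, Y⟩ ≤ ⟨ϖᵢ, X⟩ for every i with αᵢ ∈ Π', and ⟨ϖᵢ, Y⟩ = ⟨ϖᵢ, X⟩ for every i with αᵢ ∈ Π ∖ Π'; (ii) Y ∈ a⁺_{Π'} and Y lies in the convex hull of the orbit W_{Π'}·X. -/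
/-!
Proposition: for `Π' ⊆ Π` and `X ∈ a⁺_{Π'}`, a vector `Y ∈ a⁺_{Π'}` satisfies
`ϖᵢ(Y) ≤ ϖᵢ(X)` for `i ∈ Π'` and `ϖᵢ(Y) = ϖᵢ(X)` for `i ∈ Π ∖ Π'` if and only if it lies
in the convex hull of the orbit `W_{Π'}·X`.
-/

open scoped RealInnerProductSpace

noncomputable section

namespace CHOrbitAux

variable {V : Type*} [NormedAddCommGroup V] [InnerProductSpace ℝ V] {r : ℕ}

def wp (g : Fin r → V ≃ₗ[ℝ] V) (l : List (Fin r)) : V ≃ₗ[ℝ] V := (l.map g).prod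

lemma wp_nil (g : Fin r → V ≃ₗ[ℝ] V) : wp g ([] : List (Fin r)) = 1 := rfl

lemma wp_cons (g : Fin r → V ≃ₗ[ℝ] V) (i : Fin r) (l : List (Fin r)) :
    wp g (i :: l) = g i * wp g l := by simp [wp]

lemma wp_append (g : Fin r → V ≃ₗ[ℝ] V) (l₁ l₂ : List (Fin r)) :
    wp g (l₁ ++ l₂) = wp g l₁ * wp g l₂ := by simp [wp]

lemma mul_apply (e e' : V ≃ₗ[ℝ] V) (x : V) : (e * e') x = e (e' x) := rfl

lemma inv_apply' (e : V ≃ₗ[ℝ] V) (x : V) : e (e⁻¹ x) = x := by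
  rw [← mul_apply, mul_inv_cancel]; rfl

lemma inv_apply₂ (e : V ≃ₗ[ℝ] V) (x : V) : e⁻¹ (e x) = x := by
  rw [← mul_apply, inv_mul_cancel]; rfl

lemma wp_S (g : Fin r → V ≃ₗ[ℝ] V) (S : Finset V) (hgS : ∀ i, ∀ β ∈ S, g i β ∈ S) :
    ∀ (l : List (Fin r)) (β), β ∈ S → wp g l β ∈ S := by
  intro l
  induction l with
  | nil => intro β h; simpa [wp] using h
  | cons i l ih => intro β h; rw [wp_cons, mul_apply]; exact hgS i _ (ih β h)

lemma coneInner {α : Fin r → V} (b : Module.Basis (Fin r) ℝ V) (hb : ∀ i, b i = α i)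
    (P' : Finset (Fin r)) (Z : V) (hZ : ∀ i ∈ P', 0 ≤ ⟪α i, Z⟫)
    (z : V) (h1 : ∀ j, 0 ≤ b.repr z j) (h2 : ∀ j, j ∉ P' → b.repr z j = 0) :
    0 ≤ ⟪Z, z⟫ := by
  classical
  have hz : z = ∑ j, b.repr z j • α j := by
    conv_lhs => rw [← b.sum_repr z]
    simp [hb]
  rw [hz, inner_sum]
  apply Finset.sum_nonneg
  intro j _
  rw [real_inner_smul_right]
  by_cases hj : j ∈ P'
  · exact mul_nonneg (h1 j) (real_inner_comm Z (α j) ▸ hZ j hj)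
  · rw [h2 j hj, zero_mul]


variable (g : Fin r → V ≃ₗ[ℝ] V) (α : Fin r → V)
  (hg : ∀ i x, g i x = x - (2 * ⟪x, α i⟫ / ⟪α i, α i⟫) • α i)

include hg

lemma refl_isom (i : Fin r) (x y : V) : ⟪g i x, g i y⟫ = ⟪x, y⟫ := by
  rw [hg, hg]
  by_cases ha : ⟪α i, α i⟫ = (0 : ℝ)
  · have : α i = 0 := by rwa [real_inner_self_eq_norm_sq, pow_eq_zero_iff, norm_eq_zero] at ha
      <;> norm_num
    simp [this]
  · simp only [inner_sub_left, inner_sub_right, real_inner_smul_left, real_inner_smul_right]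
    rw [real_inner_comm (α i) x, real_inner_comm (α i) y]
    field_simp
    ring

lemma refl_invol (i : Fin r) (x : V) : g i (g i x) = x := by
  rw [hg, hg]
  by_cases ha : ⟪α i, α i⟫ = (0 : ℝ)
  · have : α i = 0 := by rwa [real_inner_self_eq_norm_sq, pow_eq_zero_iff, norm_eq_zero] at ha
      <;> norm_num
    simp [this]
  · simp only [inner_sub_left, real_inner_smul_left, sub_smul, smul_smul]
    rw [real_inner_comm (α i) x]
    field_simp
    module

lemma refl_sq (i : Fin r) : g i * g i = 1 :=
  LinearEquiv.ext fun x => refl_invol g α hg i x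

lemma refl_inv (i : Fin r) : (g i)⁻¹ = g i :=
  eq_comm.mp (eq_inv_of_mul_eq_one_left (refl_sq g α hg i))

lemma wp_reverse (l : List (Fin r)) : wp g l.reverse = (wp g l)⁻¹ := by
  induction l with
  | nil => simp [wp]
  | cons i l ih =>
    rw [List.reverse_cons, wp_append, wp_cons, wp_cons, wp_nil, mul_one, ih,
      mul_inv_rev, refl_inv g α hg]

lemma wp_inner (l : List (Fin r)) (x y : V) : ⟪wp g l x, wp g l y⟫ = ⟪x, y⟫ := by
  induction l with
  | nil => simp [wp]
  | cons i l ih => rw [wp_cons, mul_apply, mul_apply, refl_isom g α hg, ih]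



lemma conj_refl (l : List (Fin r)) (i : Fin r) (x : V) :
    wp g l (g i ((wp g l)⁻¹ x)) =
      x - (2 * ⟪x, wp g l (α i)⟫ / ⟪wp g l (α i), wp g l (α i)⟫) • wp g l (α i) := by
  have h1 : ⟪(wp g l)⁻¹ x, α i⟫ = ⟪x, wp g l (α i)⟫ := by
    have h := wp_inner g α hg l ((wp g l)⁻¹ x) (α i)
    rw [inv_apply' (wp g l) x] at h; exact h.symm
  have h2 : ⟪wp g l (α i), wp g l (α i)⟫ = ⟪α i, α i⟫ := wp_inner g α hg l _ _
  rw [hg, map_sub, map_smul, inv_apply', h1, h2]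

lemma refl_smul (i : Fin r) (t : ℝ) (ht : t ≠ 0) (x β : V) (hβ : β = t • α i) :
    x - (2 * ⟪x, β⟫ / ⟪β, β⟫) • β = g i x := by
  subst hβ
  rw [hg]
  have : (2 * ⟪x, t • α i⟫ / ⟪t • α i, t • α i⟫) • (t • α i)
      = (2 * ⟪x, α i⟫ / ⟪α i, α i⟫) • α i := by
    rw [smul_smul, real_inner_smul_right, real_inner_smul_left, real_inner_smul_right]
    congr 1
    by_cases ha : ⟪α i, α i⟫ = (0:ℝ)
    · rw [ha]; simp
    · field_simp
  rw [this]

lemma repr_g_apply (b : Module.Basis (Fin r) ℝ V) (hb : ∀ i, b i = α i)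
    (i : Fin r) (x : V) (j : Fin r) (hj : j ≠ i) :
    b.repr (g i x) j = b.repr x j := by
  rw [hg, map_sub, map_smul]
  have : b.repr (α i) = Finsupp.single i 1 := by rw [← hb]; exact b.repr_self i
  rw [this]
  simp [Finsupp.single_eq_of_ne hj]


theorem lemA
    (S P : Finset V) (hS0 : (0:V) ∉ S) (hPS : P ⊆ S)
    (hPpart : ∀ β ∈ S, (β ∈ P ∨ -β ∈ P) ∧ ¬(β ∈ P ∧ -β ∈ P))
    (hαP : ∀ i, α i ∈ P)
    (b : Module.Basis (Fin r) ℝ V) (hb : ∀ i, b i = α i)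
    (hpos : ∀ β ∈ P, ∀ j, 0 ≤ b.repr β j)
    (hgS : ∀ i, ∀ β ∈ S, g i β ∈ S)
    (P' : Finset (Fin r))
    (X : V) (hX : ∀ i ∈ P', 0 ≤ ⟪α i, X⟫) :
    ∀ (l : List (Fin r)), (∀ i ∈ l, i ∈ P') →
      (∀ j, 0 ≤ b.repr (X - wp g l X) j) ∧ (∀ j, j ∉ P' → b.repr (X - wp g l X) j = 0) := by
  classical
  have hα0 : ∀ i, α i ≠ 0 := fun i h => hS0 (h ▸ hPS (hαP i))
  have hαnorm : ∀ i, (0:ℝ) < ⟪α i, α i⟫ := by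
    intro i
    rw [real_inner_self_eq_norm_sq]
    exact pow_pos (norm_pos_iff.mpr (hα0 i)) 2
  have memP_pos : ∀ β ∈ S, ∀ j, 0 < b.repr β j → β ∈ P := by
    intro β hβ j hj
    rcases (hPpart β hβ).1 with h | h
    · exact h
    · exfalso
      have h2 := hpos _ h j
      rw [map_neg, Finsupp.neg_apply] at h2
      linarith
  have lemG : ∀ i, ∀ β, β ∈ P → (∃ k, k ≠ i ∧ b.repr β k ≠ 0) → g i β ∈ P := by
    intro i β hβ ⟨k, hk1, hk2⟩
    refine memP_pos _ (hgS i β (hPS hβ)) k ?_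
    rw [repr_g_apply g α hg b hb i β k hk1]
    exact lt_of_le_of_ne (hpos _ hβ k) (Ne.symm hk2)
  have propCase : ∀ i, ∀ β, β ∈ P → (∀ k, k ≠ i → b.repr β k = 0) →
      β = (b.repr β i) • α i ∧ 0 < b.repr β i := by
    intro i β hβ hcoord
    have hsum := b.sum_repr β
    have hβeq : β = b.repr β i • α i := by
      have hone : ∑ k, b.repr β k • b k = b.repr β i • b i :=
        Finset.sum_eq_single i (fun k _ hk => by rw [hcoord k hk, zero_smul])
          (fun h => absurd (Finset.mem_univ i) h)
      conv_lhs => rw [← hsum]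
      rw [hone, hb]
    refine ⟨hβeq, lt_of_le_of_ne (hpos _ hβ i) fun h0 => ?_⟩
    apply hS0
    have : β = 0 := by rw [hβeq, ← h0, zero_smul]
    exact this ▸ hPS hβ
  have wpS : ∀ (l : List (Fin r)) (β), β ∈ S → wp g l β ∈ S := by
    intro l
    induction l with
    | nil => intro β h; simpa [wp] using h
    | cons i l ih => intro β h; rw [wp_cons, mul_apply]; exact hgS i _ (ih β h)
  have wpSupp : ∀ (l : List (Fin r)), (∀ i ∈ l, i ∈ P') →
      ∀ x, (∀ j, j ∉ P' → b.repr x j = 0) → ∀ j, j ∉ P' → b.repr (wp g l x) j = 0 := by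
    intro l
    induction l with
    | nil => intro _ x hx; simpa [wp] using hx
    | cons i l ih =>
      intro hl x hx j hj
      have hji : j ≠ i := fun h => hj (h ▸ hl i List.mem_cons_self)
      rw [wp_cons, mul_apply, repr_g_apply g α hg b hb i _ j hji]
      exact ih (fun k hk => hl k (List.mem_cons_of_mem _ hk)) x hx j hj
  have domInner : ∀ Z, (∀ i ∈ P', 0 ≤ ⟪α i, Z⟫) → ∀ z,
      (∀ j, 0 ≤ b.repr z j) → (∀ j, j ∉ P' → b.repr z j = 0) → 0 ≤ ⟪Z, z⟫ := by
    intro Z hZ z h1 h2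
    have hz : z = ∑ j, b.repr z j • α j := by
      conv_lhs => rw [← b.sum_repr z]
      simp [hb]
    rw [hz, inner_sum]
    apply Finset.sum_nonneg
    intro j _
    rw [real_inner_smul_right]
    by_cases hj : j ∈ P'
    · exact mul_nonneg (h1 j) (real_inner_comm Z (α j) ▸ hZ j hj)
    · rw [h2 j hj, zero_mul]
  suffices H : ∀ n (l : List (Fin r)), l.length ≤ n → (∀ i ∈ l, i ∈ P') →
      (∀ j, 0 ≤ b.repr (X - wp g l X) j) ∧
      (∀ j, j ∉ P' → b.repr (X - wp g l X) j = 0) by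
    intro l hl; exact H l.length l le_rfl hl
  intro n
  induction n with
  | zero =>
    intro l hlen _
    have : l = [] := List.length_eq_zero_iff.mp (Nat.le_zero.mp hlen)
    subst this
    constructor <;> intro j <;> simp [wp]
  | succ n IH =>
    intro l hlen hl
    match l with
    | [] => constructor <;> intro j <;> simp [wp]
    | i :: l' =>
      have hi : i ∈ P' := hl i List.mem_cons_self
      have hl' : ∀ k ∈ l', k ∈ P' := fun k hk => hl k (List.mem_cons_of_mem _ hk)
      have hlen' : l'.length ≤ n := by simpa using hlen
      set c : ℝ := 2 * ⟪wp g l' X, α i⟫ / ⟪α i, α i⟫ with hc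
      have hsplit : X - wp g (i :: l') X = (X - wp g l' X) + c • α i := by
        rw [wp_cons, mul_apply, hg]
        abel
      have hrepri : b.repr (α i) = Finsupp.single i 1 := by rw [← hb]; exact b.repr_self i
      by_cases hcpos : 0 ≤ c
      · obtain ⟨ih1, ih2⟩ := IH l' hlen' hl'
        constructor
        · intro j
          rw [hsplit, map_add, map_smul, Finsupp.add_apply, Finsupp.smul_apply, hrepri]
          by_cases hji : j = i
          · subst hji
            rw [Finsupp.single_eq_same]
            have := ih1 j
            simp only [smul_eq_mul, mul_one]
            linarith
          · rw [Finsupp.single_eq_of_ne hji]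
            simpa using ih1 j
        · intro j hj
          have hji : j ≠ i := fun h => hj (h ▸ hi)
          rw [hsplit, map_add, map_smul, Finsupp.add_apply, Finsupp.smul_apply, hrepri,
            Finsupp.single_eq_of_ne hji, ih2 j hj]
          simp
      · push_neg at hcpos
        have hinner : ⟪X, wp g l'.reverse (α i)⟫ < 0 := by
          have he : ⟪X, wp g l'.reverse (α i)⟫ = ⟪wp g l' X, α i⟫ := by
            rw [wp_reverse g α hg]
            have h := wp_inner g α hg l' X ((wp g l')⁻¹ (α i))
            rw [inv_apply'] at h
            exact h.symm
          rw [he]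
          have hnorm := hαnorm i
          rw [hc] at hcpos
          by_contra hcon
          push_neg at hcon
          have : 0 ≤ 2 * ⟪wp g l' X, α i⟫ / ⟪α i, α i⟫ := by positivity
          linarith
        set v : ℕ → V := fun m => wp g ((l'.take m).reverse) (α i) with hv
        have hv0 : v 0 = α i := by simp [hv, wp]
        have hvlen : v l'.length = wp g l'.reverse (α i) := by
          simp [hv, List.take_length]
        have hvnotP : v l'.length ∉ P := by
          intro hmem
          have hmem' : wp g l'.reverse (α i) ∈ P := hvlen ▸ hmem
          have hsupp : ∀ k, k ∉ P' → b.repr (wp g l'.reverse (α i)) k = 0 := by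
            apply wpSupp (l'.reverse) (fun k hk => hl' k (List.mem_reverse.mp hk))
            intro k hk
            rw [hrepri, Finsupp.single_eq_of_ne fun h => hk (by rw [h]; exact hi)]
          have h0 := domInner X hX _ (hpos _ hmem') hsupp
          linarith
        have hstep : ∀ m (hm : m < l'.length), v (m+1) = g (l'.get ⟨m, hm⟩) (v m) := by
          intro m hm
          have htake : l'.take (m+1) = l'.take m ++ [l'.get ⟨m, hm⟩] := by
            have h := (List.take_concat_get hm).symm
            simpa [List.concat_eq_append] using h
          rw [hv]
          simp only [htake, List.reverse_append, List.reverse_singleton, List.singleton_append,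
            wp_cons, mul_apply]
        have hex : ∃ m, v m ∉ P := ⟨l'.length, hvnotP⟩
        set N := Nat.find hex with hN
        have hNnotP : v N ∉ P := Nat.find_spec hex
        have hN1 : 1 ≤ N := by
          rcases Nat.eq_zero_or_pos N with h | h
          · exact absurd (h ▸ hv0 ▸ hαP i : v N ∈ P) hNnotP
          · exact h
        have hNle : N ≤ l'.length := Nat.find_min' hex hvnotP
        have hmlt : N - 1 < l'.length := lt_of_lt_of_le (Nat.sub_lt hN1 one_pos) hNle
        set j := l'.get ⟨N - 1, hmlt⟩ with hj
        have hjP' : j ∈ P' := hl' _ (List.get_mem l' ⟨N-1, hmlt⟩)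
        have hvm : v (N - 1) ∈ P := by
          have hlt : N - 1 < N := Nat.sub_lt hN1 one_pos
          have := Nat.find_min hex hlt
          exact not_not.mp this
        have hsucc : v N = g j (v (N-1)) := by
          have h := hstep (N-1) hmlt
          rwa [Nat.sub_add_cancel hN1] at h
        have hprop : ∀ k, k ≠ j → b.repr (v (N-1)) k = 0 := by
          by_contra hcon
          push_neg at hcon
          obtain ⟨k, hk1, hk2⟩ := hcon
          exact hNnotP (hsucc ▸ lemG j _ hvm ⟨k, hk1, hk2⟩)
        obtain ⟨hveq, htpos⟩ := propCase j _ hvm hprop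
        set p := wp g (l'.take (N - 1)) with hp
        have hq : wp g ((l'.take (N-1)).reverse) = p⁻¹ := wp_reverse g α hg _
        have hvmp : v (N-1) = p⁻¹ (α i) := by rw [hv]; simp only [← hq]
        have hconj : p⁻¹ * g i * p = g j := by
          apply LinearEquiv.ext
          intro x
          have hcr := conj_refl g α hg ((l'.take (N-1)).reverse) i x
          rw [hq, inv_inv] at hcr
          rw [mul_apply, mul_apply]
          rw [hcr, ← hvmp]
          exact refl_smul g α hg j _ (ne_of_gt htpos) x _ hveq
        have htake : l'.take N = l'.take (N-1) ++ [j] := by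
          conv_lhs => rw [show N = (N-1)+1 from (Nat.sub_add_cancel hN1).symm]
          rw [hj]
          have h := (List.take_concat_get hmlt).symm
          simpa [List.concat_eq_append] using h
        have hword : wp g (i :: l') = wp g (l'.take (N-1) ++ l'.drop N) := by
          rw [wp_cons]
          conv_lhs => rw [← List.take_append_drop N l']
          rw [wp_append, htake, wp_append, wp_cons, wp_nil, mul_one, ← hp, ← hconj, wp_append, ← hp]
          have : g i * (p * (p⁻¹ * g i * p) * wp g (l'.drop N))
              = (g i * g i) * (p * wp g (l'.drop N)) := by group
          rw [this, refl_sq g α hg, one_mul]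
        have hlist : ∀ k ∈ l'.take (N-1) ++ l'.drop N, k ∈ P' := by
          intro k hk
          rcases List.mem_append.mp hk with h | h
          · exact hl' k (List.mem_of_mem_take h)
          · exact hl' k (List.mem_of_mem_drop h)
        have hlen'' : (l'.take (N-1) ++ l'.drop N).length ≤ n := by
          rw [List.length_append, List.length_take, List.length_drop]
          have h1 : 1 ≤ l'.length := le_trans hN1 hNle
          omega
        have := IH _ hlen'' hlist
        rwa [← hword] at this

end CHOrbitAux

open CHOrbitAux

theorem mem_convexHull_orbit_iff_weight_inequalities
    {V : Type*} [NormedAddCommGroup V] [InnerProductSpace ℝ V] [FiniteDimensional ℝ V]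
    -- the root system Σ
    (S : Finset V) (hS0 : (0 : V) ∉ S)
    (hSspan : Submodule.span ℝ (S : Set V) = ⊤)
    -- the reflections s_α
    (sα : V → (V ≃ₗ[ℝ] V))
    (hsα : ∀ α ∈ S, ∀ x : V, sα α x = x - (2 * ⟪x, α⟫ / ⟪α, α⟫) • α)
    (hSrefl : ∀ α ∈ S, ∀ β ∈ S, sα α β ∈ S)
    (hcrys : ∀ α ∈ S, ∀ β ∈ S, ∃ n : ℤ, 2 * ⟪β, α⟫ / ⟪α, α⟫ = (n : ℝ))
    -- the system of positive roots Σ⁺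
    (P : Finset V) (hPS : P ⊆ S)
    (hPhalf : ∃ f : V →ₗ[ℝ] ℝ, ∀ β ∈ P, 0 < f β)
    (hPpart : ∀ β ∈ S, (β ∈ P ∨ -β ∈ P) ∧ ¬(β ∈ P ∧ -β ∈ P))
    -- the simple roots Π = {α 1, …, α r}, a basis of `V`
    (r : ℕ) (α : Fin r → V)
    (hαP : ∀ i, α i ∈ P)
    (hαindep : LinearIndependent ℝ α)
    (hαspan : Submodule.span ℝ (Set.range α) = ⊤)
    (hαsimple : ∀ β ∈ P, ∃ c : Fin r → ℝ, (∀ i, 0 ≤ c i) ∧ β = ∑ i, c i • α i)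
    -- the roots α'ᵢ (:= 2αᵢ if `2αᵢ` is a root, αᵢ otherwise)
    (α' : Fin r → V)
    (hα' : ∀ i, ((2 : ℝ) • α i ∈ S → α' i = (2 : ℝ) • α i) ∧
      ((2 : ℝ) • α i ∉ S → α' i = α i))
    -- the fundamental weights ϖᵢ
    (ϖ : Fin r → V)
    (hϖ : ∀ i j, 2 * ⟪ϖ i, α' j⟫ / ⟪α' j, α' j⟫ = if i = j then (1 : ℝ) else 0)
    -- the subset Π' ⊆ Π
    (P' : Finset (Fin r))
    -- `X ∈ a⁺_{Π'}` and `Y ∈ a`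
    (X : V) (hX : ∀ i ∈ P', 0 ≤ ⟪α i, X⟫)
    (Y : V) :
    ((∀ i ∈ P', 0 ≤ ⟪α i, Y⟫) ∧
      (∀ i ∈ P', ⟪ϖ i, Y⟫ ≤ ⟪ϖ i, X⟫) ∧
      (∀ i, i ∉ P' → ⟪ϖ i, Y⟫ = ⟪ϖ i, X⟫)) ↔
    ((∀ i ∈ P', 0 ≤ ⟪α i, Y⟫) ∧
      Y ∈ convexHull ℝ ((fun w : V ≃ₗ[ℝ] V => w X) ''
        (Subgroup.closure {g : V ≃ₗ[ℝ] V | ∃ i ∈ P', g = sα (α i)} :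
          Set (V ≃ₗ[ℝ] V)))) := by
  classical
  set gf : Fin r → V ≃ₗ[ℝ] V := fun i => sα (α i) with hgfdef
  have hgf : ∀ i x, gf i x = x - (2 * ⟪x, α i⟫ / ⟪α i, α i⟫) • α i :=
    fun i x => hsα (α i) (hPS (hαP i)) x
  have hgS : ∀ i, ∀ β ∈ S, gf i β ∈ S := fun i β hβ => hSrefl (α i) (hPS (hαP i)) β hβ
  set b : Module.Basis (Fin r) ℝ V := Module.Basis.mk hαindep (by rw [hαspan]) with hbdef
  have hb : ∀ i, b i = α i := fun i => Module.Basis.mk_apply hαindep _ i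
  have hα0 : ∀ i, α i ≠ 0 := fun i h => hS0 (h ▸ hPS (hαP i))
  have hαnorm : ∀ i, (0:ℝ) < ⟪α i, α i⟫ := by
    intro i
    rw [real_inner_self_eq_norm_sq]
    exact pow_pos (norm_pos_iff.mpr (hα0 i)) 2
  have hpos : ∀ β ∈ P, ∀ j, 0 ≤ b.repr β j := by
    intro β hβ j
    obtain ⟨c, hc0, hce⟩ := hαsimple β hβ
    have hce' : β = ∑ i, c i • b i := by rw [hce]; simp [hb]
    rw [hce', b.repr_sum_self]
    exact hc0 j
  -- facts about fundamental weights
  have hα'norm : ∀ j, ⟪α' j, α' j⟫ ≠ (0:ℝ) := by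
    intro j h
    have h1 := hϖ j j
    rw [h, if_pos rfl] at h1
    simp at h1
  have hα't : ∀ j, ∃ t : ℝ, 0 < t ∧ α' j = t • α j := by
    intro j
    by_cases h : (2:ℝ) • α j ∈ S
    · exact ⟨2, two_pos, (hα' j).1 h⟩
    · exact ⟨1, one_pos, by rw [(hα' j).2 h, one_smul]⟩
  have hϖ0 : ∀ i j, i ≠ j → ⟪ϖ i, α j⟫ = 0 := by
    intro i j hij
    obtain ⟨t, ht, he⟩ := hα't j
    have h1 := hϖ i j
    rw [if_neg hij, div_eq_zero_iff] at h1
    rcases h1 with h1 | h1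
    · rw [he, real_inner_smul_right] at h1
      have : ⟪ϖ i, α j⟫ * t = 0 := by linarith
      rcases mul_eq_zero.mp this with h | h
      · exact h
      · exact absurd h (ne_of_gt ht)
    · exact absurd h1 (hα'norm j)
  have hϖpos : ∀ i, 0 < ⟪ϖ i, α i⟫ := by
    intro i
    obtain ⟨t, ht, he⟩ := hα't i
    have hd : (0:ℝ) < ⟪α' i, α' i⟫ :=
      lt_of_le_of_ne real_inner_self_nonneg (Ne.symm (hα'norm i))
    have h1 := hϖ i i
    rw [if_pos rfl] at h1
    have hx : 2 * ⟪ϖ i, α' i⟫ = ⟪α' i, α' i⟫ := by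
      field_simp at h1
      linarith
    have h2 : ⟪ϖ i, α' i⟫ = t * ⟪ϖ i, α i⟫ := by rw [he, real_inner_smul_right]
    by_contra hcon
    push_neg at hcon
    nlinarith
  have hwrepr : ∀ i z, ⟪ϖ i, z⟫ = b.repr z i * ⟪ϖ i, α i⟫ := by
    intro i z
    conv_lhs => rw [← b.sum_repr z]
    rw [inner_sum]
    rw [Finset.sum_eq_single i
      (fun k _ hk => by rw [real_inner_smul_right, hb, hϖ0 i k (Ne.symm hk), mul_zero])
      (fun h => absurd (Finset.mem_univ i) h)]
    rw [real_inner_smul_right, hb]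
  -- word representation of elements of the group
  set sset : Set (V ≃ₗ[ℝ] V) := {g : V ≃ₗ[ℝ] V | ∃ i ∈ P', g = sα (α i)} with hsset
  have hword : ∀ w ∈ Subgroup.closure sset,
      ∃ l : List (Fin r), (∀ k ∈ l, k ∈ P') ∧ wp gf l = w := by
    intro w hw
    refine Subgroup.closure_induction
      (p := fun g _ => ∃ l : List (Fin r), (∀ k ∈ l, k ∈ P') ∧ wp gf l = g)
      ?_ ?_ ?_ ?_ hw
    · rintro x ⟨i, hi, rfl⟩
      refine ⟨[i], by simpa using hi, ?_⟩
      simp [wp, hgfdef]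
    · exact ⟨[], by simp, rfl⟩
    · rintro x y _ _ ⟨l1, h1, rfl⟩ ⟨l2, h2, rfl⟩
      refine ⟨l1 ++ l2, ?_, wp_append gf l1 l2⟩
      intro k hk
      rcases List.mem_append.mp hk with h | h
      · exact h1 k h
      · exact h2 k h
    · rintro x _ ⟨l, h1, rfl⟩
      exact ⟨l.reverse, fun k hk => h1 k (List.mem_reverse.mp hk), wp_reverse gf α hgf l⟩
  have coneA := lemA gf α hgf S P hS0 hPS hPpart hαP b hb hpos hgS P' X hX
  -- upper bounds on the orbit
  have hub : ∀ i ∈ P', ∀ w ∈ Subgroup.closure sset, ⟪ϖ i, w X⟫ ≤ ⟪ϖ i, X⟫ := by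
    intro i hi w hw
    obtain ⟨l, hlP, rfl⟩ := hword w hw
    have hc := coneA l hlP
    have h1 : 0 ≤ ⟪ϖ i, X - wp gf l X⟫ := by
      rw [hwrepr]
      exact mul_nonneg (hc.1 i) (le_of_lt (hϖpos i))
    rw [inner_sub_right] at h1
    linarith
  have heqorb : ∀ i, i ∉ P' → ∀ w ∈ Subgroup.closure sset, ⟪ϖ i, w X⟫ = ⟪ϖ i, X⟫ := by
    intro i hi w hw
    obtain ⟨l, hlP, rfl⟩ := hword w hw
    have hc := coneA l hlP
    have h1 : ⟪ϖ i, X - wp gf l X⟫ = 0 := by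
      rw [hwrepr, hc.2 i hi, zero_mul]
    rw [inner_sub_right] at h1
    linarith
  constructor
  · -- hard direction
    rintro ⟨hYdom, hle, heq⟩
    refine ⟨hYdom, ?_⟩
    by_contra hYK
    -- finiteness of the group as a set
    have hGfin : (Subgroup.closure sset : Set (V ≃ₗ[ℝ] V)).Finite := by
      apply Set.Finite.of_finite_image
        (f := fun (g : V ≃ₗ[ℝ] V) => fun i : Fin r => g (α i))
      · apply Set.Finite.subset (Set.Finite.pi (fun _ : Fin r => S.finite_toSet))
        rintro _ ⟨w, hw, rfl⟩
        rw [Set.mem_pi]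
        intro i _
        obtain ⟨l, _, rfl⟩ := hword w hw
        exact wp_S gf S hgS l (α i) (hPS (hαP i))
      · intro g1 _ g2 _ heqf
        apply LinearEquiv.toLinearMap_injective
        apply b.ext
        intro i
        rw [hb]
        exact congrFun heqf i
    have horbfin : ((fun w : V ≃ₗ[ℝ] V => w X) ''
        (Subgroup.closure sset : Set (V ≃ₗ[ℝ] V))).Finite := hGfin.image _
    have hKcl : IsClosed (convexHull ℝ ((fun w : V ≃ₗ[ℝ] V => w X) ''
        (Subgroup.closure sset : Set (V ≃ₗ[ℝ] V)))) :=
      (horbfin.isCompact_convexHull ℝ).isClosed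
    obtain ⟨f, u, hfu, huY⟩ :=
      geometric_hahn_banach_closed_point (convex_convexHull ℝ _) hKcl hYK
    set v : V := (InnerProductSpace.toDual ℝ V).symm f with hv
    have hvf : ∀ z, ⟪v, z⟫ = f z := fun z => InnerProductSpace.toDual_symm_apply
    set ρ : V := ∑ i ∈ P', ϖ i with hρ
    have hρα : ∀ i ∈ P', 0 < ⟪ρ, α i⟫ := by
      intro i hi
      rw [hρ, sum_inner]
      rw [Finset.sum_eq_single i (fun k _ hk => hϖ0 k i hk) (fun h => absurd hi h)]
      exact hϖpos i
    -- maximizer over the (finite) group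
    have h1G : (1 : V ≃ₗ[ℝ] V) ∈ hGfin.toFinset := by
      rw [Set.Finite.mem_toFinset]
      exact Subgroup.one_mem _
    obtain ⟨w₀, hw₀mem, hw₀max⟩ :=
      Finset.exists_max_image hGfin.toFinset (fun w => ⟪ρ, w v⟫) ⟨1, h1G⟩
    have hw₀G : w₀ ∈ Subgroup.closure sset := hGfin.mem_toFinset.mp hw₀mem
    -- the maximizer is dominant
    have hdom : ∀ i ∈ P', 0 ≤ ⟪α i, w₀ v⟫ := by
      intro i hi
      have hgi : gf i ∈ Subgroup.closure sset := Subgroup.subset_closure ⟨i, hi, rfl⟩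
      have hmem : gf i * w₀ ∈ Subgroup.closure sset := mul_mem hgi hw₀G
      have h1 := hw₀max _ (hGfin.mem_toFinset.mpr hmem)
      rw [mul_apply, hgf, inner_sub_right, real_inner_smul_right] at h1
      have h2 : 0 ≤ 2 * ⟪w₀ v, α i⟫ / ⟪α i, α i⟫ * ⟪ρ, α i⟫ := by linarith
      have h3 := hρα i hi
      have h4 := hαnorm i
      by_contra hcon
      push_neg at hcon
      rw [real_inner_comm] at hcon
      have h5 : 2 * ⟪w₀ v, α i⟫ / ⟪α i, α i⟫ < 0 :=
        div_neg_of_neg_of_pos (by linarith) h4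
      nlinarith
    -- X - Y lies in the cone
    have hXY : (∀ j, 0 ≤ b.repr (X - Y) j) ∧ (∀ j, j ∉ P' → b.repr (X - Y) j = 0) := by
      constructor
      · intro j
        by_cases hj : j ∈ P'
        · have h1 : 0 ≤ ⟪ϖ j, X - Y⟫ := by
            rw [inner_sub_right]
            have := hle j hj
            linarith
          rw [hwrepr] at h1
          by_contra hcon
          push_neg at hcon
          nlinarith [hϖpos j]
        · have h1 : ⟪ϖ j, X - Y⟫ = 0 := by
            rw [inner_sub_right, heq j hj]
            ring
          rw [hwrepr] at h1
          rcases mul_eq_zero.mp h1 with h | h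
          · rw [h]
          · exact absurd h (ne_of_gt (hϖpos j))
      · intro j hj
        have h1 : ⟪ϖ j, X - Y⟫ = 0 := by
          rw [inner_sub_right, heq j hj]
          ring
        rw [hwrepr] at h1
        rcases mul_eq_zero.mp h1 with h | h
        · exact h
        · exact absurd h (ne_of_gt (hϖpos j))
    -- step 1 : ⟪v, Y⟫ ≤ ⟪w₀ v, Y⟫
    have hstep1 : ⟪v, Y⟫ ≤ ⟪w₀ v, Y⟫ := by
      obtain ⟨l, hlP, hleq⟩ := hword w₀⁻¹ (inv_mem hw₀G)
      have hcone := lemA gf α hgf S P hS0 hPS hPpart hαP b hb hpos hgS P' (w₀ v) hdom l hlP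
      rw [hleq] at hcone
      have hwv : w₀⁻¹ (w₀ v) = v := inv_apply₂ w₀ v
      rw [hwv] at hcone
      have h0 := coneInner b hb P' Y hYdom (w₀ v - v) hcone.1 hcone.2
      rw [inner_sub_right] at h0
      have hc1 : ⟪v, Y⟫ = ⟪Y, v⟫ := real_inner_comm _ _
      have hc2 : ⟪w₀ v, Y⟫ = ⟪Y, w₀ v⟫ := real_inner_comm _ _
      linarith
    -- step 2 : ⟪w₀ v, Y⟫ ≤ ⟪w₀ v, X⟫
    have hstep2 : ⟪w₀ v, Y⟫ ≤ ⟪w₀ v, X⟫ := by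
      have h0 := coneInner b hb P' (w₀ v) hdom (X - Y) hXY.1 hXY.2
      rw [inner_sub_right] at h0
      linarith
    -- step 3 : ⟪w₀ v, X⟫ = ⟪v, w₀⁻¹ X⟫
    have hstep3 : ⟪w₀ v, X⟫ = ⟪v, w₀⁻¹ X⟫ := by
      obtain ⟨l, _, hleq⟩ := hword w₀ hw₀G
      rw [← hleq]
      have h1 := wp_inner gf α hgf l v ((wp gf l)⁻¹ X)
      rw [inv_apply'] at h1
      exact h1
    -- step 4 : ⟪v, w₀⁻¹ X⟫ < ⟪v, Y⟫
    have hstep4 : ⟪v, w₀⁻¹ X⟫ < ⟪v, Y⟫ := by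
      have hmem : w₀⁻¹ X ∈ (fun w : V ≃ₗ[ℝ] V => w X) ''
          (Subgroup.closure sset : Set (V ≃ₗ[ℝ] V)) := ⟨w₀⁻¹, inv_mem hw₀G, rfl⟩
      have h1 := hfu _ (subset_convexHull ℝ _ hmem)
      rw [hvf, hvf]
      linarith
    linarith
  · -- easy direction
    rintro ⟨hYdom, hYhull⟩
    refine ⟨hYdom, ?_, ?_⟩
    · intro i hi
      have hsub : convexHull ℝ ((fun w : V ≃ₗ[ℝ] V => w X) ''
          (Subgroup.closure sset : Set (V ≃ₗ[ℝ] V))) ⊆ {z | ⟪ϖ i, z⟫ ≤ ⟪ϖ i, X⟫} := by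
        apply convexHull_min
        · rintro _ ⟨w, hw, rfl⟩
          exact hub i hi w hw
        · exact convex_halfSpace_le
            ⟨fun x y => inner_add_right _ _ _, fun c x => real_inner_smul_right _ _ c⟩ _
      exact hsub hYhull
    · intro i hi
      have hsub : convexHull ℝ ((fun w : V ≃ₗ[ℝ] V => w X) ''
          (Subgroup.closure sset : Set (V ≃ₗ[ℝ] V))) ⊆ {z | ⟪ϖ i, z⟫ = ⟪ϖ i, X⟫} := by
        apply convexHull_min
        · rintro _ ⟨w, hw, rfl⟩
          exact heqorb i hi w hw
        · exact convex_hyperplane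
            ⟨fun x y => inner_add_right _ _ _, fun c x => real_inner_smul_right _ _ c⟩ _
      exact hsub hYhull

end
end

section
/- For every generic X ∈ a⁺ there exists a generic X' ∈ a⁺ that has the same type as X and is extreme. If moreover X is symmetric, then X' can be chosen symmetric as well. -/
/-!
Proposition: for every generic `X ∈ a⁺` there exists a generic `X' ∈ a⁺` that has the
same type as `X` and that is extreme; if `X` is symmetric, `X'` can be chosen symmetric.
-/

open scoped RealInnerProductSpace

noncomputable section

/-- `Y` has the same type as `X` (relative to the finite set `Ω` of weights, identified
with linear forms via the inner product): every element of `Ω` takes the same sign on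
`X` and on `Y`. -/
def SameTypeW {V : Type*} [NormedAddCommGroup V] [InnerProductSpace ℝ V]
    (Ω : Finset V) (X Y : V) : Prop :=
  (∀ l ∈ Ω, (0 < ⟪l, X⟫ ↔ 0 < ⟪l, Y⟫)) ∧ (∀ l ∈ Ω, (⟪l, X⟫ < 0 ↔ ⟪l, Y⟫ < 0))

/-- Two reals have the same (strict) sign. -/
def SgnIff (a b : ℝ) : Prop := ((0 < a) ↔ (0 < b)) ∧ ((a < 0) ↔ (b < 0))

lemma sgnIff_refl (a : ℝ) : SgnIff a a := ⟨Iff.rfl, Iff.rfl⟩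

lemma sgnIff_symm {a b : ℝ} (h : SgnIff a b) : SgnIff b a := ⟨h.1.symm, h.2.symm⟩

lemma sgnIff_trans {a b c : ℝ} (h : SgnIff a b) (h' : SgnIff b c) : SgnIff a c :=
  ⟨h.1.trans h'.1, h.2.trans h'.2⟩

lemma sgnIff_of_eq {a b : ℝ} (h : a = b) : SgnIff a b := h ▸ sgnIff_refl a

lemma sgnIff_zero {a b : ℝ} (h : SgnIff a b) : a = 0 ↔ b = 0 := by
  constructor
  · intro h0
    by_contra hb
    rcases lt_or_gt_of_ne hb with h' | h'
    · have := h.2.mpr h'; linarith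
    · have := h.1.mpr h'; linarith
  · intro h0
    by_contra hb
    rcases lt_or_gt_of_ne hb with h' | h'
    · have := h.2.mp h'; linarith
    · have := h.1.mp h'; linarith

lemma sgnIff_neg {a b : ℝ} (h : SgnIff a b) : SgnIff (-a) (-b) := by
  constructor
  · simpa [neg_pos] using h.2
  · simpa [neg_lt_zero] using h.1

lemma sgnIff_of_signs {a b : ℝ} (h1 : 0 < a → 0 < b) (h2 : a < 0 → b < 0)
    (h3 : a = 0 → b = 0) : SgnIff a b := by
  constructor
  · constructor
    · exact h1
    · intro hb
      rcases lt_trichotomy a 0 with h | h | h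
      · have := h2 h; linarith
      · have := h3 h; linarith
      · exact h
  · constructor
    · exact h2
    · intro hb
      rcases lt_trichotomy a 0 with h | h | h
      · exact h
      · have := h3 h; linarith
      · have := h1 h; linarith

lemma sameTypeW_iff {V : Type*} [NormedAddCommGroup V] [InnerProductSpace ℝ V]
    (Ω : Finset V) (X Y : V) :
    SameTypeW Ω X Y ↔ ∀ l ∈ Ω, SgnIff ⟪l, X⟫ ⟪l, Y⟫ := by
  constructor
  · intro h l hl; exact ⟨h.1 l hl, h.2 l hl⟩
  · intro h; exact ⟨fun l hl => (h l hl).1, fun l hl => (h l hl).2⟩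

/-- If an injective map sends a finset into itself, its image is the whole finset. -/
lemma finset_image_eq_self {V : Type*} [DecidableEq V] {s : Finset V} {f : V → V}
    (hinj : Function.Injective f) (h : ∀ x ∈ s, f x ∈ s) : s.image f = s := by
  apply Finset.eq_of_subset_of_card_le
  · intro y hy
    obtain ⟨x, hx, rfl⟩ := Finset.mem_image.mp hy
    exact h x hx
  · rw [Finset.card_image_of_injective _ hinj]

theorem exists_extreme_symmetric_generic_of_same_type
    {V : Type*} [NormedAddCommGroup V] [InnerProductSpace ℝ V] [FiniteDimensional ℝ V]
    -- the root system Σ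
    (S : Finset V) (hS0 : (0 : V) ∉ S)
    (hSspan : Submodule.span ℝ (S : Set V) = ⊤)
    -- the reflections s_α
    (sα : V → (V ≃ₗ[ℝ] V))
    (hsα : ∀ α ∈ S, ∀ x : V, sα α x = x - (2 * ⟪x, α⟫ / ⟪α, α⟫) • α)
    (hSrefl : ∀ α ∈ S, ∀ β ∈ S, sα α β ∈ S)
    (hcrys : ∀ α ∈ S, ∀ β ∈ S, ∃ n : ℤ, 2 * ⟪β, α⟫ / ⟪α, α⟫ = (n : ℝ))
    -- the system of positive roots Σ⁺
    (P : Finset V) (hPS : P ⊆ S)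
    (hPhalf : ∃ f : V →ₗ[ℝ] ℝ, ∀ β ∈ P, 0 < f β)
    (hPpart : ∀ β ∈ S, (β ∈ P ∨ -β ∈ P) ∧ ¬(β ∈ P ∧ -β ∈ P))
    -- the simple roots Π = {α 1, …, α r}, a basis of `V`
    (r : ℕ) (α : Fin r → V)
    (hαP : ∀ i, α i ∈ P)
    (hαindep : LinearIndependent ℝ α)
    (hαspan : Submodule.span ℝ (Set.range α) = ⊤)
    (hαsimple : ∀ β ∈ P, ∃ c : Fin r → ℝ, (∀ i, 0 ≤ c i) ∧ β = ∑ i, c i • α i)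
    -- the longest element `w₀` of the Weyl group `W = ⟨s_α : α ∈ Σ⟩`
    (w₀ : V ≃ₗ[ℝ] V)
    (hw₀W : w₀ ∈ Subgroup.closure (sα '' (S : Set V)))
    (hw₀ : (⇑w₀) '' (P : Set V) = (fun x : V => -x) '' (P : Set V))
    -- the finite `W`-stable set `Ω` of restricted weights
    (Ω : Finset V)
    (hΩW : ∀ w ∈ Subgroup.closure (sα '' (S : Set V)), ∀ l ∈ Ω, w l ∈ Ω)
    -- a generic `X` in the closed dominant Weyl chamber
    (X : V)
    (hXdom : ∀ i, 0 ≤ ⟪α i, X⟫)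
    (hXgen : ∀ l ∈ Ω, l ≠ 0 → ⟪l, X⟫ ≠ 0) :
    ∃ X' : V,
      (∀ i, 0 ≤ ⟪α i, X'⟫) ∧
      (∀ l ∈ Ω, l ≠ 0 → ⟪l, X'⟫ ≠ 0) ∧
      SameTypeW Ω X X' ∧
      (∀ w ∈ Subgroup.closure (sα '' (S : Set V)),
        SameTypeW Ω X' (w X') → w X' = X') ∧
      (-(w₀ X) = X → -(w₀ X') = X') := by
  classical
  set Wgp := Subgroup.closure (sα '' (S : Set V)) with hWgp
  -- basic facts about the roots
  have hSne : ∀ β ∈ S, ⟪β, β⟫ ≠ 0 := by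
    intro β hβ
    have hβ0 : β ≠ 0 := fun h => hS0 (h ▸ hβ)
    simpa [inner_self_eq_zero] using hβ0
  -- the reflections are involutions
  have hinvol : ∀ β ∈ S, ∀ x : V, sα β (sα β x) = x := by
    intro β hβ x
    have hA : ⟪β, β⟫ ≠ 0 := hSne β hβ
    rw [hsα β hβ, hsα β hβ x, inner_sub_left, real_inner_smul_left]
    have hc : 2 * (⟪x, β⟫ - 2 * ⟪x, β⟫ / ⟪β, β⟫ * ⟪β, β⟫) / ⟪β, β⟫
        = -(2 * ⟪x, β⟫ / ⟪β, β⟫) := by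
      field_simp
      ring
    rw [hc, neg_smul, sub_neg_eq_add, sub_add_cancel]
  -- the reflections are isometries
  have hrefl_iso : ∀ β ∈ S, ∀ x y : V, ⟪sα β x, sα β y⟫ = ⟪x, y⟫ := by
    intro β hβ x y
    have hA : ⟪β, β⟫ ≠ 0 := hSne β hβ
    rw [hsα β hβ, hsα β hβ]
    simp only [inner_sub_left, inner_sub_right, real_inner_smul_left, real_inner_smul_right]
    rw [real_inner_comm β x, real_inner_comm β y]
    field_simp
    ring
  -- every element of the Weyl group is an isometry preserving `S`
  have hQ : ∀ w ∈ Wgp, (∀ x y : V, ⟪w x, w y⟫ = ⟪x, y⟫) ∧ (∀ β ∈ S, w β ∈ S) := by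
    intro w hw
    induction hw using Subgroup.closure_induction with
    | mem u hu =>
      obtain ⟨β, hβ, rfl⟩ := hu
      exact ⟨hrefl_iso β hβ, fun γ hγ => hSrefl β hβ γ hγ⟩
    | one => simp
    | mul u v hu hv ihu ihv =>
      constructor
      · intro x y
        have : (u * v) x = u (v x) := rfl
        rw [this]
        have : (u * v) y = u (v y) := rfl
        rw [this, ihu.1, ihv.1]
      · intro β hβ
        have : (u * v) β = u (v β) := rfl
        rw [this]
        exact ihu.2 _ (ihv.2 β hβ)
    | inv u hu ihu =>
      constructor
      · intro x y
        have h1 : u (u⁻¹ x) = x := u.apply_symm_apply x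
        have h2 : u (u⁻¹ y) = y := u.apply_symm_apply y
        calc ⟪u⁻¹ x, u⁻¹ y⟫ = ⟪u (u⁻¹ x), u (u⁻¹ y)⟫ := (ihu.1 _ _).symm
          _ = ⟪x, y⟫ := by rw [h1, h2]
      · intro β hβ
        have himg : S.image (⇑u) = S :=
          finset_image_eq_self u.injective (fun x hx => ihu.2 x hx)
        have hβ' : β ∈ S.image (⇑u) := by rw [himg]; exact hβ
        obtain ⟨γ, hγ, hγβ⟩ := Finset.mem_image.mp hβ'
        have hg : u⁻¹ β = γ := by
          apply u.injective
          rw [hγβ]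
          exact u.apply_symm_apply β
        rw [hg]; exact hγ
  -- adjoint identity
  have hadj : ∀ w ∈ Wgp, ∀ l z : V, ⟪l, w z⟫ = ⟪w⁻¹ l, z⟫ := by
    intro w hw l z
    have h1 : w (w⁻¹ l) = l := w.apply_symm_apply l
    calc ⟪l, w z⟫ = ⟪w (w⁻¹ l), w z⟫ := by rw [h1]
      _ = ⟪w⁻¹ l, z⟫ := (hQ w hw).1 _ _
  -- adjoint identity for reflections
  have hadj_refl : ∀ β ∈ S, ∀ l z : V, ⟪l, sα β z⟫ = ⟪sα β l, z⟫ := by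
    intro β hβ l z
    have h := hrefl_iso β hβ l (sα β z)
    rw [hinvol β hβ z] at h
    exact h.symm
  -- the orbit of `X` under the Weyl group is finite
  have horbfin : Set.Finite {Z : V | ∃ w ∈ Wgp, w X = Z} := by
    have hφinj : Function.Injective
        (fun w : {w : V ≃ₗ[ℝ] V // w ∈ Wgp} =>
          (fun β : (S : Set V) => (⟨w.1 β.1, (hQ w.1 w.2).2 β.1 β.2⟩ : (S : Set V)))) := by
      intro u v h
      apply Subtype.ext
      apply LinearEquiv.toLinearMap_injective
      apply LinearMap.ext_on hSspan
      intro x hx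
      have := congrFun h ⟨x, hx⟩
      exact Subtype.ext_iff.mp this
    haveI : Finite {w : V ≃ₗ[ℝ] V // w ∈ Wgp} := Finite.of_injective _ hφinj
    have : {Z : V | ∃ w ∈ Wgp, w X = Z}
        = Set.range (fun w : {w : V ≃ₗ[ℝ] V // w ∈ Wgp} => w.1 X) := by
      ext Z
      constructor
      · rintro ⟨w, hw, rfl⟩; exact ⟨⟨w, hw⟩, rfl⟩
      · rintro ⟨⟨w, hw⟩, rfl⟩; exact ⟨w, hw, rfl⟩
    rw [this]
    exact Set.finite_range _
  -- the finite set `T` of Weyl translates of `X` of the same type as `X`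
  have hOfin : Set.Finite {Z : V | (∃ w ∈ Wgp, w X = Z) ∧ SameTypeW Ω X Z} :=
    horbfin.subset (fun Z hZ => hZ.1)
  set T : Finset V := hOfin.toFinset with hT
  have hmem : ∀ Z : V, Z ∈ T ↔ ((∃ w ∈ Wgp, w X = Z) ∧ SameTypeW Ω X Z) := by
    intro Z; rw [hT, Set.Finite.mem_toFinset]; rfl
  have hXT : X ∈ T := by
    rw [hmem]
    exact ⟨⟨1, one_mem _, rfl⟩, ⟨fun l _ => Iff.rfl, fun l _ => Iff.rfl⟩⟩
  have hTne : T.Nonempty := ⟨X, hXT⟩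
  have hTtype : ∀ Z ∈ T, ∀ l ∈ Ω, SgnIff ⟪l, X⟫ ⟪l, Z⟫ := by
    intro Z hZ
    exact (sameTypeW_iff Ω X Z).mp ((hmem Z).mp hZ).2
  -- the candidate
  set X' : V := ∑ Z ∈ T, Z with hX'
  -- its type
  have hsum : ∀ l ∈ Ω, SgnIff ⟪l, X⟫ ⟪l, X'⟫ := by
    intro l hl
    have his : ⟪l, X'⟫ = ∑ Z ∈ T, ⟪l, Z⟫ := inner_sum T _ l
    apply sgnIff_of_signs
    · intro hpos
      rw [his]
      exact Finset.sum_pos (fun Z hZ => (hTtype Z hZ l hl).1.mp hpos) hTne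
    · intro hneg
      rw [his]
      have : 0 < ∑ Z ∈ T, -⟪l, Z⟫ :=
        Finset.sum_pos (fun Z hZ => by
          have := (hTtype Z hZ l hl).2.mp hneg; linarith) hTne
      rw [Finset.sum_neg_distrib] at this
      linarith
    · intro h0
      rw [his]
      exact Finset.sum_eq_zero (fun Z hZ => (sgnIff_zero (hTtype Z hZ l hl)).mp h0)
  have hsame : SameTypeW Ω X X' := (sameTypeW_iff Ω X X').mpr hsum
  refine ⟨X', ?_, ?_, hsame, ?_, ?_⟩
  · -- dominance
    intro i
    have hαiS : α i ∈ S := hPS (hαP i)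
    have hsi : sα (α i) ∈ Wgp := Subgroup.subset_closure ⟨α i, hαiS, rfl⟩
    by_cases hall : ∀ Z ∈ T, 0 ≤ ⟪α i, Z⟫
    · rw [hX', inner_sum]
      exact Finset.sum_nonneg hall
    · push_neg at hall
      obtain ⟨Z, hZT, hZneg⟩ := hall
      -- the point where the segment from `X` to `Z` crosses the wall of `α i`
      set a : ℝ := -⟪α i, Z⟫ with hadef
      have ha : 0 < a := by rw [hadef]; linarith
      set b : ℝ := ⟪α i, X⟫ with hbdef
      have hb : 0 ≤ b := hXdom i
      set Y : V := a • X + b • Z with hY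
      have hYα : ⟪Y, α i⟫ = 0 := by
        have h1 : ⟪Y, α i⟫ = a * ⟪X, α i⟫ + b * ⟪Z, α i⟫ := by
          rw [hY, inner_add_left, real_inner_smul_left, real_inner_smul_left]
        rw [h1, real_inner_comm (α i) X, real_inner_comm (α i) Z, hbdef, hadef]
        ring
      have hYfix : sα (α i) Y = Y := by
        rw [hsα (α i) hαiS Y, hYα]
        simp
      have hXY : ∀ l ∈ Ω, SgnIff ⟪l, X⟫ ⟪l, Y⟫ := by
        intro l hl
        have hexp : ⟪l, Y⟫ = a * ⟪l, X⟫ + b * ⟪l, Z⟫ := by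
          rw [hY, inner_add_right, real_inner_smul_right, real_inner_smul_right]
        apply sgnIff_of_signs
        · intro hpos
          have hz : 0 < ⟪l, Z⟫ := (hTtype Z hZT l hl).1.mp hpos
          rw [hexp]
          have h1 : 0 < a * ⟪l, X⟫ := mul_pos ha hpos
          have h2 : 0 ≤ b * ⟪l, Z⟫ := mul_nonneg hb hz.le
          linarith
        · intro hneg
          have hz : ⟪l, Z⟫ < 0 := (hTtype Z hZT l hl).2.mp hneg
          rw [hexp]
          have h1 : a * ⟪l, X⟫ < 0 := mul_neg_of_pos_of_neg ha hneg
          have h2 : b * ⟪l, Z⟫ ≤ 0 := mul_nonpos_of_nonneg_of_nonpos hb hz.le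
          linarith
        · intro h0
          have hz : ⟪l, Z⟫ = 0 := (sgnIff_zero (hTtype Z hZT l hl)).mp h0
          rw [hexp, h0, hz]; ring
      -- `s_i X` has the same type as `X`
      have hsX : ∀ l ∈ Ω, SgnIff ⟪l, X⟫ ⟪sα (α i) l, X⟫ := by
        intro l hl
        have hlΩ : sα (α i) l ∈ Ω := hΩW _ hsi l hl
        have h1 : ⟪sα (α i) l, Y⟫ = ⟪l, Y⟫ := by
          rw [← hadj_refl (α i) hαiS l Y, hYfix]
        exact sgnIff_trans (sgnIff_trans (hXY l hl) (sgnIff_of_eq h1.symm))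
          (sgnIff_symm (hXY (sα (α i) l) hlΩ))
      -- the reflection `s_i` maps `T` into itself
      have hmapT : ∀ Z' ∈ T, sα (α i) Z' ∈ T := by
        intro Z' hZ'
        obtain ⟨⟨u, huW, huX⟩, htyp⟩ := (hmem Z').mp hZ'
        rw [hmem]
        refine ⟨⟨sα (α i) * u, mul_mem hsi huW, ?_⟩, ?_⟩
        · show sα (α i) (u X) = _
          rw [huX]
        · rw [sameTypeW_iff]
          intro l hl
          have hlΩ : sα (α i) l ∈ Ω := hΩW _ hsi l hl
          have h1 : ⟪l, sα (α i) Z'⟫ = ⟪sα (α i) l, Z'⟫ :=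
            hadj_refl (α i) hαiS l Z'
          exact sgnIff_trans (sgnIff_trans (hsX l hl) (hTtype Z' hZ' _ hlΩ))
            (sgnIff_of_eq h1.symm)
      have himg : T.image (⇑(sα (α i))) = T :=
        finset_image_eq_self (sα (α i)).injective hmapT
      have hαα : sα (α i) (α i) = -(α i) := by
        rw [hsα (α i) hαiS]
        have hA : ⟪α i, α i⟫ ≠ 0 := hSne (α i) hαiS
        have h2 : 2 * ⟪α i, α i⟫ / ⟪α i, α i⟫ = 2 := by
          field_simp
        rw [h2, two_smul]
        abel
      have hflip : ∀ Z' : V, ⟪α i, sα (α i) Z'⟫ = -⟪α i, Z'⟫ := by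
        intro Z'
        have h1 : ⟪α i, sα (α i) Z'⟫ = ⟪sα (α i) (α i), Z'⟫ :=
          hadj_refl (α i) hαiS (α i) Z'
        rw [h1, hαα, inner_neg_left]
      have hsum0 : ∑ Z' ∈ T, ⟪α i, Z'⟫ = 0 := by
        have h1 : ∑ Z' ∈ T, ⟪α i, Z'⟫ = ∑ Z' ∈ T, ⟪α i, sα (α i) Z'⟫ := by
          conv_lhs => rw [← himg]
          rw [Finset.sum_image (fun x _ y _ h => (sα (α i)).injective h)]
        have h2 : ∑ Z' ∈ T, ⟪α i, sα (α i) Z'⟫ = -∑ Z' ∈ T, ⟪α i, Z'⟫ := by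
          rw [← Finset.sum_neg_distrib]
          exact Finset.sum_congr rfl (fun Z' _ => hflip Z')
        rw [h2] at h1
        linarith
      rw [hX', inner_sum, hsum0]
  · -- genericity
    intro l hl hlne h0
    exact hXgen l hl hlne ((sgnIff_zero (hsum l hl)).mpr h0)
  · -- extremeness
    intro w hw hsameX'
    have hsame' : ∀ l ∈ Ω, SgnIff ⟪l, X'⟫ ⟪l, w X'⟫ :=
      (sameTypeW_iff Ω X' (w X')).mp hsameX'
    have hwinv : w⁻¹ ∈ Wgp := inv_mem hw
    -- `w` maps `T` into itself
    have hmapT : ∀ Z' ∈ T, w Z' ∈ T := by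
      intro Z' hZ'
      obtain ⟨⟨u, huW, huX⟩, htyp⟩ := (hmem Z').mp hZ'
      rw [hmem]
      refine ⟨⟨w * u, mul_mem hw huW, ?_⟩, ?_⟩
      · show w (u X) = _
        rw [huX]
      · rw [sameTypeW_iff]
        intro l hl
        have hlΩ : w⁻¹ l ∈ Ω := hΩW _ hwinv l hl
        -- sgnIff ⟪l, X⟫ ⟪w⁻¹ l, X⟫
        have hkey : SgnIff ⟪l, X⟫ ⟪w⁻¹ l, X⟫ := by
          have c1 : SgnIff ⟪l, X⟫ ⟪l, X'⟫ := hsum l hl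
          have c2 : SgnIff ⟪l, X'⟫ ⟪l, w X'⟫ := hsame' l hl
          have c3 : ⟪l, w X'⟫ = ⟪w⁻¹ l, X'⟫ := hadj w hw l X'
          have c4 : SgnIff ⟪w⁻¹ l, X'⟫ ⟪w⁻¹ l, X⟫ := sgnIff_symm (hsum _ hlΩ)
          exact sgnIff_trans (sgnIff_trans (sgnIff_trans c1 c2) (sgnIff_of_eq c3)) c4
        have h1 : ⟪l, w Z'⟫ = ⟪w⁻¹ l, Z'⟫ := hadj w hw l Z'
        exact sgnIff_trans (sgnIff_trans hkey (hTtype Z' hZ' _ hlΩ))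
          (sgnIff_of_eq h1.symm)
    have himg : T.image (⇑w) = T := finset_image_eq_self w.injective hmapT
    calc w X' = ∑ Z ∈ T, w Z := map_sum w _ T
      _ = ∑ Z ∈ T.image (⇑w), Z := by
          rw [Finset.sum_image (fun x _ y _ h => w.injective h)]
      _ = X' := by rw [himg]
  · -- symmetry
    intro hsymm
    have hw0X : w₀ X = -X := neg_eq_iff_eq_neg.mp hsymm
    have hw0invX : w₀⁻¹ X = -X := by
      have h2 : w₀ (-X) = X := by rw [map_neg, hw0X, neg_neg]
      calc w₀⁻¹ X = w₀⁻¹ (w₀ (-X)) := by rw [h2]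
        _ = -X := w₀.symm_apply_apply (-X)
    have hw0inv : w₀⁻¹ ∈ Wgp := inv_mem hw₀W
    set θ : V → V := fun z => -(w₀ z) with hθ
    have hθinj : Function.Injective θ := by
      intro x y h
      exact w₀.injective (neg_injective h)
    have hmapT : ∀ Z' ∈ T, θ Z' ∈ T := by
      intro Z' hZ'
      obtain ⟨⟨u, huW, huX⟩, htyp⟩ := (hmem Z').mp hZ'
      rw [hmem]
      refine ⟨⟨w₀ * u * w₀⁻¹, mul_mem (mul_mem hw₀W huW) hw0inv, ?_⟩, ?_⟩
      · show w₀ (u (w₀⁻¹ X)) = θ Z'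
        rw [hw0invX, map_neg, map_neg, huX]
      · rw [sameTypeW_iff]
        intro l hl
        have hlΩ : w₀⁻¹ l ∈ Ω := hΩW _ hw0inv l hl
        have h1 : ⟪l, θ Z'⟫ = -⟪w₀⁻¹ l, Z'⟫ := by
          rw [hθ]
          show ⟪l, -(w₀ Z')⟫ = _
          rw [inner_neg_right, hadj w₀ hw₀W l Z']
        have h2 : ⟪w₀⁻¹ l, X⟫ = -⟪l, X⟫ := by
          have : ⟪l, w₀ X⟫ = ⟪w₀⁻¹ l, X⟫ := hadj w₀ hw₀W l X
          rw [hw0X, inner_neg_right] at this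
          linarith
        have c1 : SgnIff ⟪w₀⁻¹ l, X⟫ ⟪w₀⁻¹ l, Z'⟫ := hTtype Z' hZ' _ hlΩ
        have c2 : SgnIff (-⟪w₀⁻¹ l, X⟫) (-⟪w₀⁻¹ l, Z'⟫) := sgnIff_neg c1
        have c3 : -⟪w₀⁻¹ l, X⟫ = ⟪l, X⟫ := by rw [h2]; ring
        exact sgnIff_trans (sgnIff_trans (sgnIff_of_eq c3.symm) c2)
          (sgnIff_of_eq h1.symm)
    have himg : T.image θ = T := finset_image_eq_self hθinj hmapT
    calc -(w₀ X') = ∑ Z ∈ T, θ Z := by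
          rw [hX', map_sum, ← Finset.sum_neg_distrib]
      _ = ∑ Z ∈ T.image θ, Z := by
          rw [Finset.sum_image (fun x _ y _ h => hθinj h)]
      _ = X' := by rw [himg]

end
end

section
/- For every X ∈ a, the set W_{Ω,X} := {w ∈ W : wX has the same type as X} is a subgroup of W, and the vector X' := Σ_{w ∈ W_{Ω,X}} wX satisfies: (a) X' has the same type as X; (b) for every w ∈ W, wX' has the same type as X' if and only if wX' = X'; (c) every σ ∈ GL(a) with σ(X) = X and σ·W_{Ω,X}·σ⁻¹ = W_{Ω,X} satisfies σ(X') = X'. -/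
/-!
For every `X ∈ a`, the set `W_{Ω,X} = {w ∈ W : wX has the same type as X}` is a subgroup
of `W`, and `X' := Σ_{w ∈ W_{Ω,X}} wX` satisfies: (a) `X'` has the same type as `X`;
(b) for every `w ∈ W`, `wX'` has the same type as `X'` iff `wX' = X'`; (c) every
`σ ∈ GL(a)` fixing `X` and normalizing `W_{Ω,X}` fixes `X'`.
-/

noncomputable section

/-- `Y` has the same type as `X` (relative to a finite set `Ω` of linear forms):
`Ω^>_Y = Ω^>_X` and `Ω^<_Y = Ω^<_X`. -/
def SameTypeD {V : Type*} [AddCommGroup V] [Module ℝ V]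
    (Ω : Finset (Module.Dual ℝ V)) (X Y : V) : Prop :=
  (∀ l ∈ Ω, (0 < l X ↔ 0 < l Y)) ∧ (∀ l ∈ Ω, (l X < 0 ↔ l Y < 0))

private lemma sum_sign_aux {ι : Type*} (T : Finset ι) (hT : T.Nonempty) (f : ι → ℝ) (c : ℝ)
    (h : ∀ i ∈ T, (0 < c ↔ 0 < f i) ∧ (c < 0 ↔ f i < 0)) :
    (0 < c ↔ 0 < ∑ i ∈ T, f i) ∧ (c < 0 ↔ ∑ i ∈ T, f i < 0) := by
  rcases lt_trichotomy c 0 with hc | hc | hc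
  · have hs : ∑ i ∈ T, f i < 0 :=
      Finset.sum_neg (fun i hi => ((h i hi).2).mp hc) hT
    constructor <;> constructor <;> intro h' <;> linarith
  · have hz : ∀ i ∈ T, f i = 0 := by
      intro i hi
      have h1 := (h i hi).1
      have h2 := (h i hi).2
      by_contra hne
      rcases lt_or_gt_of_ne hne with h' | h'
      · have := h2.mpr h'; linarith
      · have := h1.mpr h'; linarith
    have hs : ∑ i ∈ T, f i = 0 := Finset.sum_eq_zero hz
    constructor <;> constructor <;> intro h' <;> linarith
  · have hs : 0 < ∑ i ∈ T, f i :=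
      Finset.sum_pos (fun i hi => ((h i hi).1).mp hc) hT
    constructor <;> constructor <;> intro h' <;> linarith

theorem averaged_vector_of_type_stabilizer
    {V : Type*} [AddCommGroup V] [Module ℝ V] [FiniteDimensional ℝ V]
    -- a finite subgroup `W` of `GL(V)`
    (W : Subgroup (V ≃ₗ[ℝ] V)) (hWfin : (W : Set (V ≃ₗ[ℝ] V)).Finite)
    -- a finite subset `Ω` of the dual space, stable under the action
    -- `(w·λ)(x) = λ(w⁻¹ x)` of `W`
    (Ω : Finset (Module.Dual ℝ V))
    (hΩ : ∀ w ∈ W, ∀ l ∈ Ω, l ∘ₗ ((w⁻¹ : V ≃ₗ[ℝ] V) : V →ₗ[ℝ] V) ∈ Ω)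
    (X : V) :
    ∃ W' : Subgroup (V ≃ₗ[ℝ] V),
      -- `W_{Ω,X}` is a subgroup of `W`
      (W' : Set (V ≃ₗ[ℝ] V)) = {w : V ≃ₗ[ℝ] V | w ∈ W ∧ SameTypeD Ω X (w X)} ∧
      ∀ X' : V,
        X' = (∑ᶠ w ∈ {w : V ≃ₗ[ℝ] V | w ∈ W ∧ SameTypeD Ω X (w X)}, w X) →
        -- (a) `X'` has the same type as `X`
        SameTypeD Ω X X' ∧
        -- (b) for every `w ∈ W`, `wX'` has the same type as `X'` iff `wX' = X'`
        (∀ w ∈ W, (SameTypeD Ω X' (w X') ↔ w X' = X')) ∧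
        -- (c) any `σ ∈ GL(V)` fixing `X` and normalizing `W_{Ω,X}` fixes `X'`
        (∀ σ : V ≃ₗ[ℝ] V, σ X = X →
          ((fun w => σ * w * σ⁻¹) ''
              {w : V ≃ₗ[ℝ] V | w ∈ W ∧ SameTypeD Ω X (w X)} =
            {w : V ≃ₗ[ℝ] V | w ∈ W ∧ SameTypeD Ω X (w X)}) →
          σ X' = X') := by
  classical
  set S : Set (V ≃ₗ[ℝ] V) := {w : V ≃ₗ[ℝ] V | w ∈ W ∧ SameTypeD Ω X (w X)} with hSdef
  have hinvapp : ∀ (w : V ≃ₗ[ℝ] V) (v : V), (w⁻¹ : V ≃ₗ[ℝ] V) (w v) = v :=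
    fun w v => w.symm_apply_apply v
  have hcomp : ∀ w ∈ W, ∀ l ∈ Ω, (l ∘ₗ (w : V →ₗ[ℝ] V)) ∈ Ω := by
    intro w hw l hl
    have := hΩ w⁻¹ (inv_mem hw) l hl
    simpa using this
  have hone : (1 : V ≃ₗ[ℝ] V) ∈ S :=
    ⟨one_mem W, fun l _ => Iff.rfl, fun l _ => Iff.rfl⟩
  have hmul : ∀ u ∈ S, ∀ v ∈ S, u * v ∈ S := by
    intro u hu v hv
    refine ⟨mul_mem hu.1 hv.1, ?_, ?_⟩ <;> intro l hl
    · exact (hu.2.1 l hl).trans (hv.2.1 (l ∘ₗ (u : V →ₗ[ℝ] V)) (hcomp u hu.1 l hl))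
    · exact (hu.2.2 l hl).trans (hv.2.2 (l ∘ₗ (u : V →ₗ[ℝ] V)) (hcomp u hu.1 l hl))
  have hinv : ∀ u ∈ S, u⁻¹ ∈ S := by
    intro u hu
    refine ⟨inv_mem hu.1, ?_, ?_⟩ <;> intro l hl
    · have h1 := hu.2.1 (l ∘ₗ ((u⁻¹ : V ≃ₗ[ℝ] V) : V →ₗ[ℝ] V)) (hΩ u hu.1 l hl)
      simpa [hinvapp] using h1.symm
    · have h1 := hu.2.2 (l ∘ₗ ((u⁻¹ : V ≃ₗ[ℝ] V) : V →ₗ[ℝ] V)) (hΩ u hu.1 l hl)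
      simpa [hinvapp] using h1.symm
  refine ⟨{ carrier := S
            one_mem' := hone
            mul_mem' := fun ha hb => hmul _ ha _ hb
            inv_mem' := fun ha => hinv _ ha }, rfl, ?_⟩
  intro X' hX'
  have hSfin : S.Finite := hWfin.subset fun w hw => hw.1
  have hXsum : X' = ∑ i ∈ hSfin.toFinset, i X := by
    rw [hX']
    exact finsum_mem_eq_finite_toFinset_sum _ hSfin
  have hT : hSfin.toFinset.Nonempty := ⟨1, hSfin.mem_toFinset.mpr hone⟩
  have ha : SameTypeD Ω X X' := by
    constructor <;> intro l hl <;> rw [hXsum, map_sum]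
    · exact (sum_sign_aux hSfin.toFinset hT (fun i => l (i X)) (l X)
        (fun i hi => ⟨(hSfin.mem_toFinset.mp hi).2.1 l hl,
          (hSfin.mem_toFinset.mp hi).2.2 l hl⟩)).1
    · exact (sum_sign_aux hSfin.toFinset hT (fun i => l (i X)) (l X)
        (fun i hi => ⟨(hSfin.mem_toFinset.mp hi).2.1 l hl,
          (hSfin.mem_toFinset.mp hi).2.2 l hl⟩)).2
  have key : ∀ w ∈ S, w X' = X' := by
    intro w hw
    rw [hXsum, map_sum]
    refine Finset.sum_nbij' (fun i => w * i) (fun j => w⁻¹ * j) ?_ ?_ ?_ ?_ ?_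
    · intro a haT
      exact hSfin.mem_toFinset.mpr (hmul w hw a (hSfin.mem_toFinset.mp haT))
    · intro a haT
      exact hSfin.mem_toFinset.mpr (hmul w⁻¹ (hinv w hw) a (hSfin.mem_toFinset.mp haT))
    · intro a _; group
    · intro a _; group
    · intro a _; rfl
  refine ⟨ha, ?_, ?_⟩
  · intro w hw
    constructor
    · intro hst
      apply key
      refine ⟨hw, ?_, ?_⟩ <;> intro l hl
      · exact (ha.1 l hl).trans ((hst.1 l hl).trans
          (ha.1 (l ∘ₗ (w : V →ₗ[ℝ] V)) (hcomp w hw l hl)).symm)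
      · exact (ha.2 l hl).trans ((hst.2 l hl).trans
          (ha.2 (l ∘ₗ (w : V →ₗ[ℝ] V)) (hcomp w hw l hl)).symm)
    · intro h
      rw [h]
      exact ⟨fun l _ => Iff.rfl, fun l _ => Iff.rfl⟩
  · intro σ hσX himg
    have hσ'X : (σ⁻¹ : V ≃ₗ[ℝ] V) X = X := by
      conv_lhs => rw [← hσX]
      exact hinvapp σ X
    have hfwd : ∀ i ∈ S, σ * i * σ⁻¹ ∈ S := by
      intro i hi
      rw [← himg]
      exact ⟨i, hi, rfl⟩
    have hbwd : ∀ j ∈ S, σ⁻¹ * j * σ ∈ S := by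
      intro j hj
      rw [← himg] at hj
      obtain ⟨i, hi, rfl⟩ := hj
      have : σ⁻¹ * (σ * i * σ⁻¹) * σ = i := by group
      rwa [this]
    rw [hXsum, map_sum]
    refine Finset.sum_nbij' (fun i => σ * i * σ⁻¹) (fun j => σ⁻¹ * j * σ) ?_ ?_ ?_ ?_ ?_
    · intro a haT
      exact hSfin.mem_toFinset.mpr (hfwd a (hSfin.mem_toFinset.mp haT))
    · intro a haT
      exact hSfin.mem_toFinset.mpr (hbwd a (hSfin.mem_toFinset.mp haT))
    · intro a _; group
    · intro a _; group
    · intro a _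
      show σ (a X) = σ (a ((σ⁻¹ : V ≃ₗ[ℝ] V) X))
      rw [hσ'X]

end
end
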